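/- arXiv:1412.3497 — 8 statements merged into one kernel-verified Lean document; each statement's English description precedes it below -/
import Mathlib

section
/- Let G be a finite simple graph, g,f:V(G)→ℤ⁺ with g(x)≤f(x) for all x, and H a subgraph of G. If for every subset S⊆V(G), setting T={x∈V(G)∖S : d_{G−S}(x)−d_H(x)+e_H(x,S)<f(x)}, we have g(S)+∑_{x∈T} d_{G−S}(x)−f(T) ≥ ∑_{x∈T} d_H(x)−e_H(S,T), then G admits all fractional (g,f)-factors excluding H, i.e., for every r:V(G)→ℤ⁺ with g(x)≤r(x)≤f(x) for all x, the graph G−E(H) has a fractional r-factor. -/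
open Finset

/-- `h` is an indicator function of a fractional `r`-factor of `G`:
a symmetric edge-weighting with values in `[0,1]`, supported on edges of `G`,
whose weighted degree at each vertex `x` equals `r x`. -/
def IsFracFactor {V : Type*} [Fintype V] (G : SimpleGraph V) (r : V → ℕ)
    (h : V → V → ℝ) : Prop :=
  (∀ x y, h x y = h y x) ∧ (∀ x y, 0 ≤ h x y ∧ h x y ≤ 1) ∧
  (∀ x y, ¬ G.Adj x y → h x y = 0) ∧ ∀ x : V, ∑ y : V, h x y = (r x : ℝ)

/-- `G` has a fractional `r`-factor. -/
def HasFracFactor {V : Type*} [Fintype V] (G : SimpleGraph V) (r : V → ℕ) : Prop :=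
  ∃ h, IsFracFactor G r h

/-- `G` has all fractional `(g,f)`-factors excluding `H`: for every integer-valued
`r` with `g ≤ r ≤ f` pointwise, `G - E(H)` has a fractional `r`-factor. -/
def HasAllFracExcl {V : Type*} [Fintype V] (G H : SimpleGraph V) (g f : V → ℕ) : Prop :=
  ∀ r : V → ℕ, (∀ x, g x ≤ r x ∧ r x ≤ f x) → HasFracFactor (G \ H) r

/-- `G` has all fractional `(g,f)`-factors. -/
def HasAllFrac {V : Type*} [Fintype V] (G : SimpleGraph V) (g f : V → ℕ) : Prop :=
  ∀ r : V → ℕ, (∀ x, g x ≤ r x ∧ r x ≤ f x) → HasFracFactor G r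

/-- Degree of `x` in the induced subgraph `G - S`. -/
def degOut {V : Type*} [Fintype V] [DecidableEq V] (G : SimpleGraph V)
    [DecidableRel G.Adj] (S : Finset V) (x : V) : ℕ :=
  (Sᶜ.filter fun y => G.Adj x y).card

/-- Number of edges of `G` with one end in `S` and the other in `T`
(for disjoint `S`, `T`). -/
def eBtw {V : Type*} [Fintype V] [DecidableEq V] (G : SimpleGraph V)
    [DecidableRel G.Adj] (S T : Finset V) : ℕ :=
  ∑ x ∈ S, (T.filter fun y => G.Adj x y).card

set_option linter.unusedSectionVars false
set_option maxHeartbeats 1000000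

namespace FracFlow


variable {V : Type*} [Fintype V] [DecidableEq V]

def row (m : V → V → ℕ) (x : V) : ℕ := ∑ y, m x y
def col (m : V → V → ℕ) (y : V) : ℕ := ∑ x, m x y

def upd (m : V → V → ℕ) (x y : V) (b : ℕ) : V → V → ℕ :=
  fun p q => if p = x ∧ q = y then b else m p q

lemma sum_ite_point (f : V → ℕ) (y : V) (b : ℕ) :
    (∑ q, if q = y then b else f q) = b + ∑ q ∈ univ \ {y}, f q := by
  have h : (fun q => if q = y then b else f q) = Function.update f y b := by
    funext q; simp [Function.update_apply]
  rw [h]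
  exact Finset.sum_update_of_mem (mem_univ y) f b

lemma sum_split_point (f : V → ℕ) (y : V) :
    (∑ q, f q) = f y + ∑ q ∈ univ \ {y}, f q := by
  have := Finset.sum_update_of_mem (mem_univ y) f (f y)
  simpa [Function.update_eq_self] using this

lemma row_upd (m : V → V → ℕ) (x y : V) (b : ℕ) (x' : V) :
    (row (upd m x y b) x' : ℤ) = row m x' + (if x' = x then (b : ℤ) - m x y else 0) := by
  by_cases hx : x' = x
  · subst hx
    have h1 : row (upd m x' y b) x' = b + ∑ q ∈ univ \ {y}, m x' q := by
      rw [row]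
      rw [show (∑ q, upd m x' y b x' q) = ∑ q, if q = y then b else m x' q from
        Finset.sum_congr rfl (fun q _ => by simp [upd])]
      exact sum_ite_point _ _ _
    have h2 : row m x' = m x' y + ∑ q ∈ univ \ {y}, m x' q := sum_split_point _ _
    rw [h1]
    simp only [if_pos rfl]
    push_cast [h2]
    ring
  · have h1 : row (upd m x y b) x' = row m x' := by
      apply Finset.sum_congr rfl
      intro q _
      simp [upd, hx]
    rw [h1, if_neg hx]; ring

lemma col_upd (m : V → V → ℕ) (x y : V) (b : ℕ) (y' : V) :
    (col (upd m x y b) y' : ℤ) = col m y' + (if y' = y then (b : ℤ) - m x y else 0) := by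
  by_cases hy : y' = y
  · subst hy
    have h1 : col (upd m x y' b) y' = b + ∑ p ∈ univ \ {x}, m p y' := by
      rw [col]
      rw [show (∑ p, upd m x y' b p y') = ∑ p, if p = x then b else m p y' from
        Finset.sum_congr rfl (fun p _ => by simp [upd])]
      exact sum_ite_point _ _ _
    have h2 : col m y' = m x y' + ∑ p ∈ univ \ {x}, m p y' := sum_split_point (fun p => m p y') x
    rw [h1]
    simp only [if_pos rfl]
    push_cast [h2]
    ring
  · have h1 : col (upd m x y b) y' = col m y' := by
      apply Finset.sum_congr rfl
      intro p _
      simp [upd, hy]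
    rw [h1, if_neg hy]; ring

lemma upd_self (m : V → V → ℕ) (x y : V) (b : ℕ) : upd m x y b x y = b := by simp [upd]

lemma upd_other (m : V → V → ℕ) (x y : V) (b : ℕ) (p q : V) (h : ¬(p = x ∧ q = y)) :
    upd m x y b p q = m p q := by simp [upd, h]


variable (G' : SimpleGraph V) [DecidableRel G'.Adj]

/-- residual arc -/
def Arc (m : V → V → ℕ) : V ⊕ V → V ⊕ V → Prop
  | Sum.inl x, Sum.inr y => G'.Adj x y ∧ m x y = 0
  | Sum.inr y, Sum.inl x => m x y = 1
  | _, _ => False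

def Steps (m : V → V → ℕ) : ℕ → V ⊕ V → V ⊕ V → Prop
  | 0, u, w => u = w
  | n+1, u, w => ∃ v, Steps m n u v ∧ Arc G' m v w

lemma aug (m : V → V → ℕ) (hcap : ∀ x y, m x y ≤ 1) :
    ∀ n (v w : V ⊕ V), Steps G' m n v w →
    ∃ m' : V → V → ℕ,
      (∀ x y, ¬ G'.Adj x y → m x y = 0 → m' x y = 0) ∧ (∀ x y, m' x y ≤ 1) ∧
      (∀ x, (row m' x : ℤ) =
        row m x + (if v = Sum.inl x then 1 else 0) - (if w = Sum.inl x then 1 else 0)) ∧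
      (∀ y, (col m' y : ℤ) =
        col m y - (if v = Sum.inr y then 1 else 0) + (if w = Sum.inr y then 1 else 0)) ∧
      (∀ p q, m' p q = 1 → m p q = 0 → ∃ k, k ≤ n ∧ Steps G' m k v (Sum.inr q)) ∧
      (∀ p q, m' p q = 0 → m p q = 1 → ∃ k, k ≤ n ∧ Steps G' m k v (Sum.inl p)) := by
  intro n
  induction n using Nat.strong_induction_on with
  | _ n IH =>
  match n with
  | 0 =>
    intro v w hvw
    refine ⟨m, fun x y _ h => h, hcap, ?_, ?_, ?_, ?_⟩
    · intro x; cases hvw; ring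
    · intro y; cases hvw; ring
    · intro p q h1 h0; omega
    · intro p q h0 h1; omega
  | Nat.succ n =>
    intro v w hvw
    obtain ⟨u, hsteps, harc⟩ := hvw
    match u, w with
    | Sum.inl x, Sum.inl x' => exact absurd harc id
    | Sum.inr y, Sum.inr y' => exact absurd harc id
    | Sum.inl x, Sum.inr y =>
      obtain ⟨hadj, hmxy⟩ := harc
      obtain ⟨m', hsupp', hcap', hrow', hcol', htr1, htr2⟩ :=
        IH n (Nat.lt_succ_self n) v (Sum.inl x) hsteps
      by_cases hxy : m' x y = 0
      · refine ⟨upd m' x y 1, ?_, ?_, ?_, ?_, ?_, ?_⟩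
        · intro p q hnadj h0
          rw [upd]
          split
          · next h => exact absurd hadj (h.1 ▸ h.2 ▸ hnadj)
          · exact hsupp' p q hnadj h0
        · intro p q
          rw [upd]; split
          · exact le_refl 1
          · exact hcap' p q
        · intro x'
          rw [row_upd]
          rw [hrow' x']
          by_cases hx : x' = x
          · subst hx; simp [hxy]; try ring
          · simp [hx, Ne.symm hx, hxy]; try ring
        · intro y'
          rw [col_upd]
          rw [hcol' y']
          by_cases hy : y' = y
          · subst hy; simp [hxy]; try ring
          · simp [hy, Ne.symm hy, hxy]; try ring
        · intro p q h1 h0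
          by_cases hpq : p = x ∧ q = y
          · obtain ⟨hp, hq⟩ := hpq
            subst hp; subst hq
            exact ⟨n + 1, le_refl _, ⟨Sum.inl p, hsteps, hadj, hmxy⟩⟩
          · rw [upd, if_neg hpq] at h1
            obtain ⟨k, hk, hk2⟩ := htr1 p q h1 h0
            exact ⟨k, hk.trans (Nat.le_succ n), hk2⟩
        · intro p q h0 h1
          by_cases hpq : p = x ∧ q = y
          · rw [upd, if_pos hpq] at h0; omega
          · rw [upd, if_neg hpq] at h0
            obtain ⟨k, hk, hk2⟩ := htr2 p q h0 h1
            exact ⟨k, hk.trans (Nat.le_succ n), hk2⟩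
      · -- conflict: shortcut
        obtain ⟨k, hk, hsteps'⟩ := htr1 x y (by have := hcap' x y; omega) hmxy
        obtain ⟨m'', a1, a2, a3, a4, a5, a6⟩ := IH k (Nat.lt_succ_of_le hk) v (Sum.inr y) hsteps'
        refine ⟨m'', a1, a2, a3, a4, ?_, ?_⟩
        · intro p q h1 h0
          obtain ⟨k', hk', h⟩ := a5 p q h1 h0
          exact ⟨k', hk'.trans (hk.trans (Nat.le_succ n)), h⟩
        · intro p q h0 h1
          obtain ⟨k', hk', h⟩ := a6 p q h0 h1
          exact ⟨k', hk'.trans (hk.trans (Nat.le_succ n)), h⟩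
    | Sum.inr y, Sum.inl x =>
      have hmxy : m x y = 1 := harc
      obtain ⟨m', hsupp', hcap', hrow', hcol', htr1, htr2⟩ :=
        IH n (Nat.lt_succ_self n) v (Sum.inr y) hsteps
      by_cases hxy : m' x y = 1
      · refine ⟨upd m' x y 0, ?_, ?_, ?_, ?_, ?_, ?_⟩
        · intro p q hnadj h0
          rw [upd]; split
          · rfl
          · exact hsupp' p q hnadj h0
        · intro p q
          rw [upd]; split
          · exact Nat.zero_le 1
          · exact hcap' p q
        · intro x'
          rw [row_upd]
          rw [hrow' x']
          by_cases hx : x' = x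
          · subst hx; simp [hxy]; try ring
          · simp [hx, Ne.symm hx, hxy]; try ring
        · intro y'
          rw [col_upd]
          rw [hcol' y']
          by_cases hy : y' = y
          · subst hy; simp [hxy]; try ring
          · simp [hy, Ne.symm hy, hxy]; try ring
        · intro p q h1 h0
          by_cases hpq : p = x ∧ q = y
          · rw [upd, if_pos hpq] at h1; omega
          · rw [upd, if_neg hpq] at h1
            obtain ⟨k, hk, hk2⟩ := htr1 p q h1 h0
            exact ⟨k, hk.trans (Nat.le_succ n), hk2⟩
        · intro p q h0 h1
          by_cases hpq : p = x ∧ q = y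
          · obtain ⟨hp, hq⟩ := hpq
            subst hp; subst hq
            exact ⟨n + 1, le_refl _, ⟨Sum.inr q, hsteps, harc⟩⟩
          · rw [upd, if_neg hpq] at h0
            obtain ⟨k, hk, hk2⟩ := htr2 p q h0 h1
            exact ⟨k, hk.trans (Nat.le_succ n), hk2⟩
      · -- conflict: shortcut
        have hxy0 : m' x y = 0 := by have := hcap' x y; omega
        obtain ⟨k, hk, hsteps'⟩ := htr2 x y hxy0 hmxy
        obtain ⟨m'', a1, a2, a3, a4, a5, a6⟩ := IH k (Nat.lt_succ_of_le hk) v (Sum.inl x) hsteps'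
        refine ⟨m'', a1, a2, a3, a4, ?_, ?_⟩
        · intro p q h1 h0
          obtain ⟨k', hk', h⟩ := a5 p q h1 h0
          exact ⟨k', hk'.trans (hk.trans (Nat.le_succ n)), h⟩
        · intro p q h0 h1
          obtain ⟨k', hk', h⟩ := a6 p q h0 h1
          exact ⟨k', hk'.trans (hk.trans (Nat.le_succ n)), h⟩


def IsFlow (r : V → ℕ) (m : V → V → ℕ) : Prop :=
  (∀ x y, ¬ G'.Adj x y → m x y = 0) ∧ (∀ x y, m x y ≤ 1) ∧
  (∀ x, row m x ≤ r x) ∧ (∀ y, col m y ≤ r y)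

theorem flowExists (r : V → ℕ)
    (hcut : ∀ A B : Finset V,
      (∑ x ∈ A, (r x : ℤ)) ≤ (∑ x ∈ B, (r x : ℤ)) + eBtw G' A Bᶜ) :
    ∃ m : V → V → ℕ, IsFlow G' r m ∧ (∀ x, row m x = r x) ∧ (∀ y, col m y = r y) := by
  classical
  set P : ℕ → Prop := fun n => ∃ m, IsFlow G' r m ∧ (∑ x, row m x) = n with hP
  have hP0 : P 0 := ⟨fun _ _ => 0, ⟨fun _ _ _ => rfl, fun _ _ => Nat.zero_le 1,
    fun x => by simp [row], fun y => by simp [col]⟩, by simp [row]⟩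
  have hbound : ∀ m, IsFlow G' r m → (∑ x, row m x) ≤ ∑ x, r x := by
    intro m hm
    exact Finset.sum_le_sum (fun x _ => hm.2.2.1 x)
  set N := Nat.findGreatest P (∑ x, r x) with hN
  have hPN : P N := Nat.findGreatest_spec (Nat.zero_le _) hP0
  obtain ⟨m, hm, hmN⟩ := hPN
  have hmax : ∀ m', IsFlow G' r m' → (∑ x, row m' x) ≤ N :=
    fun m' h => Nat.le_findGreatest (hbound m' h) ⟨m', h, rfl⟩
  have hrow : ∀ x, row m x = r x := by
    by_contra hcon
    push_neg at hcon
    obtain ⟨a, ha⟩ := hcon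
    have halt : row m a < r a := lt_of_le_of_ne (hm.2.2.1 a) ha
    set Reach : V ⊕ V → Prop := fun u => ∃ n, Steps G' m n (Sum.inl a) u with hReach
    set A : Finset V := univ.filter (fun x => Reach (Sum.inl x)) with hA
    set B : Finset V := univ.filter (fun y => Reach (Sum.inr y)) with hB
    have haA : a ∈ A := by
      simp only [hA, mem_filter, mem_univ, true_and]
      exact ⟨0, rfl⟩
    -- (b): every reachable right vertex is saturated
    have hsat : ∀ y ∈ B, col m y = r y := by
      intro y hy
      simp only [hB, mem_filter, mem_univ, true_and] at hy
      obtain ⟨n, hsteps⟩ := hy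
      by_contra hne
      have hlt : col m y < r y := lt_of_le_of_ne (hm.2.2.2 y) hne
      obtain ⟨m', h1, h2, h3, h4, _, _⟩ := aug G' m hm.2.1 n (Sum.inl a) (Sum.inr y) hsteps
      have hflow' : IsFlow G' r m' := by
        refine ⟨fun p q hn => h1 p q hn (hm.1 p q hn), h2, ?_, ?_⟩
        · intro x
          have := h3 x
          have hr := hm.2.2.1 x
          by_cases hax : a = x
          · subst hax
            simp at this
            omega
          · rw [if_neg (by simpa using hax), if_neg (by simp)] at this
            omega
        · intro z
          have := h4 z
          have hr := hm.2.2.2 z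
          by_cases hyz : y = z
          · subst hyz
            rw [if_neg (by simp), if_pos rfl] at this
            omega
          · rw [if_neg (by simp), if_neg (by simpa using hyz)] at this
            omega
      have htot : (∑ x, row m' x) = N + 1 := by
        have : (∑ x, (row m' x : ℤ)) = (∑ x, (row m x : ℤ)) + 1 := by
          rw [Finset.sum_congr rfl (fun x _ => h3 x), Finset.sum_sub_distrib,
            Finset.sum_add_distrib]
          simp
        have h5 : (∑ x, (row m' x : ℤ)) = ((∑ x, row m' x : ℕ) : ℤ) := by push_cast; ring
        have h6 : (∑ x, (row m x : ℤ)) = ((∑ x, row m x : ℕ) : ℤ) := by push_cast; ring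
        rw [h5, h6, hmN] at this
        exact_mod_cast this
      have := hmax m' hflow'
      omega
    -- (c)
    have hstepA : ∀ x ∈ A, ∀ y, G'.Adj x y → m x y = 0 → y ∈ B := by
      intro x hx y hadj h0
      simp only [hA, mem_filter, mem_univ, true_and] at hx
      obtain ⟨n, hsteps⟩ := hx
      simp only [hB, mem_filter, mem_univ, true_and]
      exact ⟨n + 1, Sum.inl x, hsteps, hadj, h0⟩
    -- (d)
    have hstepB : ∀ y ∈ B, ∀ x, m x y = 1 → x ∈ A := by
      intro y hy x h1
      simp only [hB, mem_filter, mem_univ, true_and] at hy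
      obtain ⟨n, hsteps⟩ := hy
      simp only [hA, mem_filter, mem_univ, true_and]
      exact ⟨n + 1, Sum.inr y, hsteps, h1⟩
    -- counting
    have key1 : ∀ x ∈ A, (∑ y ∈ Bᶜ, m x y) = (Bᶜ.filter fun y => G'.Adj x y).card := by
      intro x hx
      rw [Finset.card_filter]
      apply Finset.sum_congr rfl
      intro y hy
      by_cases hadj : G'.Adj x y
      · rw [if_pos hadj]
        have h0 : m x y ≠ 0 := by
          intro h0
          exact (mem_compl.mp hy) (hstepA x hx y hadj h0)
        have := hm.2.1 x y
        omega
      · rw [if_neg hadj, hm.1 x y hadj]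
    have key2 : (∑ x ∈ A, ∑ y ∈ B, m x y) = ∑ y ∈ B, r y := by
      rw [Finset.sum_comm]
      apply Finset.sum_congr rfl
      intro y hy
      rw [← hsat y hy, col]
      apply Finset.sum_subset (Finset.subset_univ A)
      intro x _ hxA
      by_contra h
      exact hxA (hstepB y hy x (by have := hm.2.1 x y; omega))
    have key3 : (∑ x ∈ A, row m x) < ∑ x ∈ A, r x :=
      Finset.sum_lt_sum (fun x _ => hm.2.2.1 x) ⟨a, haA, halt⟩
    have split : (∑ x ∈ A, row m x) = (∑ x ∈ A, ∑ y ∈ B, m x y) + ∑ x ∈ A, ∑ y ∈ Bᶜ, m x y := by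
      rw [← Finset.sum_add_distrib]
      apply Finset.sum_congr rfl
      intro x _
      rw [row, ← Finset.sum_add_sum_compl B (m x)]
    have hEB : (∑ x ∈ A, ∑ y ∈ Bᶜ, m x y) = eBtw G' A Bᶜ :=
      Finset.sum_congr rfl key1
    have hc := hcut A B
    have : (∑ x ∈ A, (r x : ℤ)) ≤ (∑ x ∈ B, (r x : ℤ)) + (eBtw G' A Bᶜ : ℤ) := hc
    have hz1 : ((∑ x ∈ A, r x : ℕ) : ℤ) = ∑ x ∈ A, (r x : ℤ) := by push_cast; ring
    have hz2 : ((∑ x ∈ B, r x : ℕ) : ℤ) = ∑ x ∈ B, (r x : ℤ) := by push_cast; ring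
    have hfin : (∑ x ∈ A, r x) ≤ (∑ x ∈ B, r x) + eBtw G' A Bᶜ := by
      rw [← hz1, ← hz2] at this
      exact_mod_cast this
    omega
  refine ⟨m, hm, hrow, ?_⟩
  have htot : (∑ y, col m y) = ∑ y, r y := by
    have h1 : (∑ y, col m y) = ∑ x, row m x := by
      simp only [row, col]
      exact Finset.sum_comm
    rw [h1]
    exact Finset.sum_congr rfl (fun x _ => hrow x)
  by_contra hcon
  push_neg at hcon
  obtain ⟨b, hb⟩ := hcon
  have : (∑ y, col m y) < ∑ y, r y :=
    Finset.sum_lt_sum (fun y _ => hm.2.2.2 y) ⟨b, mem_univ b, lt_of_le_of_ne (hm.2.2.2 b) hb⟩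
  omega



lemma eBtw_eq_sum (S T : Finset V) :
    eBtw G' S T = ∑ x ∈ S, ∑ y ∈ T, if G'.Adj x y then 1 else 0 :=
  Finset.sum_congr rfl fun _ _ => Finset.card_filter _ _

lemma eBtw_comm (S T : Finset V) : eBtw G' S T = eBtw G' T S := by
  rw [eBtw_eq_sum, eBtw_eq_sum, Finset.sum_comm]
  refine Finset.sum_congr rfl fun x _ => Finset.sum_congr rfl fun y _ => ?_
  exact if_congr (G'.adj_comm y x) rfl rfl

lemma eBtw_mono_right (S : Finset V) {T₁ T₂ : Finset V} (h : T₁ ⊆ T₂) :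
    eBtw G' S T₁ ≤ eBtw G' S T₂ :=
  Finset.sum_le_sum fun x _ =>
    Finset.card_le_card (Finset.filter_subset_filter _ h)

lemma eBtw_union_right (S : Finset V) {T₁ T₂ : Finset V} (h : Disjoint T₁ T₂) :
    eBtw G' S (T₁ ∪ T₂) = eBtw G' S T₁ + eBtw G' S T₂ := by
  rw [eBtw, eBtw, eBtw, ← Finset.sum_add_distrib]
  refine Finset.sum_congr rfl fun x _ => ?_
  rw [Finset.filter_union]
  exact Finset.card_union_of_disjoint
    (Finset.disjoint_filter_filter h)

lemma eBtw_union_left {S₁ S₂ : Finset V} (T : Finset V) (h : Disjoint S₁ S₂) :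
    eBtw G' (S₁ ∪ S₂) T = eBtw G' S₁ T + eBtw G' S₂ T :=
  Finset.sum_union h

lemma cut_of_disjoint_cut (r : V → ℕ)
    (h : ∀ P Q : Finset V, Disjoint P Q →
      (∑ x ∈ P, (r x : ℤ)) ≤ (∑ x ∈ Q, (r x : ℤ)) + eBtw G' P Qᶜ) :
    ∀ A B : Finset V,
      (∑ x ∈ A, (r x : ℤ)) ≤ (∑ x ∈ B, (r x : ℤ)) + eBtw G' A Bᶜ := by
  intro A B
  have h1 := h (A \ B) (B \ A) disjoint_sdiff_sdiff
  have e1 : (∑ x ∈ A, (r x : ℤ)) = ∑ x ∈ A ∩ B, (r x : ℤ) + ∑ x ∈ A \ B, (r x : ℤ) :=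
    (Finset.sum_inter_add_sum_sdiff A B _).symm
  have e2 : (∑ x ∈ B, (r x : ℤ)) = ∑ x ∈ A ∩ B, (r x : ℤ) + ∑ x ∈ B \ A, (r x : ℤ) := by
    rw [Finset.inter_comm]
    exact (Finset.sum_inter_add_sum_sdiff B A _).symm
  have c1 : eBtw G' (A \ B) ((B \ A)ᶜ) ≤ eBtw G' A Bᶜ := by
    have hcompl : (B \ A)ᶜ = Bᶜ ∪ (A ∩ B) := by
      ext z
      simp only [Finset.mem_compl, Finset.mem_sdiff, Finset.mem_union, Finset.mem_inter]
      tauto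
    have hd1 : Disjoint (Bᶜ) (A ∩ B) :=
      disjoint_compl_left.mono_right Finset.inter_subset_right
    rw [hcompl, eBtw_union_right G' _ hd1]
    have hsub : A \ B ⊆ Bᶜ := fun x hx =>
      Finset.mem_compl.mpr (Finset.mem_sdiff.mp hx).2
    calc eBtw G' (A \ B) Bᶜ + eBtw G' (A \ B) (A ∩ B)
        = eBtw G' (A \ B) Bᶜ + eBtw G' (A ∩ B) (A \ B) := by
          rw [eBtw_comm G' (A \ B) (A ∩ B)]
      _ ≤ eBtw G' (A \ B) Bᶜ + eBtw G' (A ∩ B) Bᶜ :=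
          Nat.add_le_add_left (eBtw_mono_right G' _ hsub) _
      _ = eBtw G' ((A \ B) ∪ (A ∩ B)) Bᶜ :=
          (eBtw_union_left G' _ (Finset.disjoint_sdiff_inter A B)).symm
      _ = eBtw G' A Bᶜ := by rw [Finset.sdiff_union_inter]
  have c1' : (eBtw G' (A \ B) ((B \ A)ᶜ) : ℤ) ≤ (eBtw G' A Bᶜ : ℤ) := by exact_mod_cast c1
  linarith

end FracFlow

/-- Sufficiency in Theorem 5: the deficiency condition implies `G` has all
fractional `(g,f)`-factors excluding `H`. -/
theorem stmt0 {V : Type*} [Fintype V] [DecidableEq V] (G H : SimpleGraph V)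
    [DecidableRel G.Adj] [DecidableRel H.Adj]
    (g f : V → ℕ) (hg : ∀ x, 1 ≤ g x) (hgf : ∀ x, g x ≤ f x) (hHG : H ≤ G)
    (hcond : ∀ S T : Finset V,
      T = Sᶜ.filter (fun x =>
        (degOut G S x : ℤ) - H.degree x + eBtw H {x} S < f x) →
      (∑ x ∈ S, (g x : ℤ)) + ∑ x ∈ T, (degOut G S x : ℤ) - ∑ x ∈ T, (f x : ℤ)
        ≥ ∑ x ∈ T, (H.degree x : ℤ) - eBtw H S T) :
    HasAllFracExcl G H g f := by
  intro r hr
  classical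
  -- identity : degree in (G \ H) minus S
  have hid : ∀ (S : Finset V) (x : V),
      (degOut (G \ H) S x : ℤ) = (degOut G S x : ℤ) - H.degree x + eBtw H {x} S := by
    intro S x
    have hsplit : ∀ y : V, (if G.Adj x y then (1 : ℕ) else 0) =
        (if (G \ H).Adj x y then 1 else 0) + (if H.Adj x y then 1 else 0) := by
      intro y
      by_cases hH : H.Adj x y
      · have hGxy : G.Adj x y := hHG hH
        simp [hH, hGxy, SimpleGraph.sdiff_adj]
      · by_cases hG : G.Adj x y <;> simp [hH, hG, SimpleGraph.sdiff_adj]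
    have h1 : degOut G S x = degOut (G \ H) S x + (Sᶜ.filter fun y => H.Adj x y).card := by
      rw [degOut, degOut, Finset.card_filter, Finset.card_filter, Finset.card_filter,
        ← Finset.sum_add_distrib]
      exact Finset.sum_congr rfl fun y _ => hsplit y
    have h2 : eBtw H {x} S = (S.filter fun y => H.Adj x y).card := by
      rw [eBtw, Finset.sum_singleton]
    have h3 : H.degree x = (S.filter fun y => H.Adj x y).card +
        (Sᶜ.filter fun y => H.Adj x y).card := by
      rw [← SimpleGraph.card_neighborFinset_eq_degree] at *
      rw [SimpleGraph.neighborFinset_eq_filter]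
      have hdc : Disjoint S Sᶜ := disjoint_compl_right
      rw [← Finset.card_union_of_disjoint (Finset.disjoint_filter_filter hdc)]
      rw [← Finset.filter_union, Finset.union_compl]
    rw [h2]
    have := h1
    omega
  -- the star condition
  have hstar : ∀ S : Finset V,
      0 ≤ (∑ x ∈ S, (g x : ℤ)) +
        ∑ x ∈ Sᶜ.filter (fun x => (degOut (G \ H) S x : ℤ) < f x),
          ((degOut (G \ H) S x : ℤ) - f x) := by
    intro S
    set T := Sᶜ.filter (fun x => (degOut (G \ H) S x : ℤ) < f x) with hT
    have hTeq : T = Sᶜ.filter (fun x => (degOut G S x : ℤ) - H.degree x + eBtw H {x} S < f x) :=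
      Finset.filter_congr fun x _ => by rw [← hid S x]
    have hc := hcond S T hTeq
    have hswap : (eBtw H S T : ℤ) = ∑ x ∈ T, (eBtw H {x} S : ℤ) := by
      have : eBtw H S T = eBtw H T S := FracFlow.eBtw_comm H S T
      rw [this, eBtw]
      push_cast
      exact Finset.sum_congr rfl fun x _ => by rw [eBtw, Finset.sum_singleton]
    have hdist : ∑ x ∈ T, ((degOut (G \ H) S x : ℤ) - f x) =
        (∑ x ∈ T, (degOut G S x : ℤ)) - (∑ x ∈ T, (H.degree x : ℤ))
          + (∑ x ∈ T, (eBtw H {x} S : ℤ)) - ∑ x ∈ T, (f x : ℤ) := by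
      have hcg : ∀ x ∈ T, (degOut (G \ H) S x : ℤ) - f x =
          ((degOut G S x : ℤ) - H.degree x + eBtw H {x} S) - f x :=
        fun x _ => by rw [hid S x]
      rw [Finset.sum_congr rfl hcg, Finset.sum_sub_distrib, Finset.sum_add_distrib,
        Finset.sum_sub_distrib]
    rw [hdist, ← hswap]
    linarith
  -- the disjoint cut condition
  have hdis : ∀ P Q : Finset V, Disjoint P Q →
      (∑ x ∈ P, (r x : ℤ)) ≤ (∑ x ∈ Q, (r x : ℤ)) + eBtw (G \ H) P Qᶜ := by
    intro P Q hPQ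
    have hs := hstar Q
    set T := Qᶜ.filter (fun x => (degOut (G \ H) Q x : ℤ) < f x) with hT
    have key : ∑ x ∈ T, ((degOut (G \ H) Q x : ℤ) - f x) ≤
        ∑ x ∈ P, ((degOut (G \ H) Q x : ℤ) - r x) := by
      have k1 : ∑ x ∈ T, ((degOut (G \ H) Q x : ℤ) - f x) ≤
          ∑ x ∈ P ∩ T, ((degOut (G \ H) Q x : ℤ) - f x) := by
        have hsub : P ∩ T ⊆ T := Finset.inter_subset_right
        have := Finset.sum_sdiff (f := fun x => (degOut (G \ H) Q x : ℤ) - f x) hsub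
        have hnp : ∑ x ∈ T \ (P ∩ T), ((degOut (G \ H) Q x : ℤ) - f x) ≤ 0 := by
          apply Finset.sum_nonpos
          intro x hx
          have hxT : x ∈ T := (Finset.mem_sdiff.mp hx).1
          have := (Finset.mem_filter.mp hxT).2
          linarith
        linarith
      have k2 : ∑ x ∈ P ∩ T, ((degOut (G \ H) Q x : ℤ) - f x) ≤
          ∑ x ∈ P ∩ T, ((degOut (G \ H) Q x : ℤ) - r x) := by
        apply Finset.sum_le_sum
        intro x _
        have := (hr x).2
        have : (r x : ℤ) ≤ f x := by exact_mod_cast this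
        linarith
      have k3 : ∑ x ∈ P ∩ T, ((degOut (G \ H) Q x : ℤ) - r x) ≤
          ∑ x ∈ P, ((degOut (G \ H) Q x : ℤ) - r x) := by
        apply Finset.sum_le_sum_of_subset_of_nonneg Finset.inter_subset_left
        intro x hxP hxnT
        have hxQc : x ∈ Qᶜ := Finset.mem_compl.mpr (Finset.disjoint_left.mp hPQ hxP)
        have hxnT' : ¬ ((degOut (G \ H) Q x : ℤ) < f x) := by
          intro hlt
          exact hxnT (Finset.mem_inter.mpr ⟨hxP, Finset.mem_filter.mpr ⟨hxQc, hlt⟩⟩)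
        push_neg at hxnT'
        have h1 : (r x : ℤ) ≤ f x := by exact_mod_cast (hr x).2
        linarith
      linarith
    have hsum_deg : ∑ x ∈ P, (degOut (G \ H) Q x : ℤ) = (eBtw (G \ H) P Qᶜ : ℤ) := by
      rw [eBtw]
      push_cast
      exact Finset.sum_congr rfl fun x _ => rfl
    have hgr : ∑ x ∈ Q, (g x : ℤ) ≤ ∑ x ∈ Q, (r x : ℤ) := by
      apply Finset.sum_le_sum
      intro x _
      exact_mod_cast (hr x).1
    have hsd : ∑ x ∈ P, ((degOut (G \ H) Q x : ℤ) - r x) =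
        (∑ x ∈ P, (degOut (G \ H) Q x : ℤ)) - ∑ x ∈ P, (r x : ℤ) :=
      Finset.sum_sub_distrib _ _
    rw [hsd, hsum_deg] at key
    linarith
  -- all cuts
  have hall := FracFlow.cut_of_disjoint_cut (G \ H) r hdis
  -- the flow
  obtain ⟨m, hm, hrowm, hcolm⟩ := FracFlow.flowExists (G \ H) r hall
  -- symmetrize
  refine ⟨fun x y => ((m x y : ℝ) + (m y x : ℝ)) / 2, ?_, ?_, ?_, ?_⟩
  · intro x y; ring
  · intro x y
    have h1 : m x y ≤ 1 := hm.2.1 x y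
    have h2 : m y x ≤ 1 := hm.2.1 y x
    have h1' : (m x y : ℝ) ≤ 1 := by exact_mod_cast h1
    have h2' : (m y x : ℝ) ≤ 1 := by exact_mod_cast h2
    constructor
    · positivity
    · linarith
  · intro x y hadj
    have h1 : m x y = 0 := hm.1 x y hadj
    have h2 : m y x = 0 := hm.1 y x (fun h => hadj h.symm)
    simp [h1, h2]
  · intro x
    rw [← Finset.sum_div, Finset.sum_add_distrib]
    have h1 : ∑ y, (m x y : ℝ) = (r x : ℝ) := by
      rw [← hrowm x, FracFlow.row]
      push_cast
      ring
    have h2 : ∑ y, (m y x : ℝ) = (r x : ℝ) := by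
      rw [← hcolm x, FracFlow.col]
      push_cast
      ring
    rw [h1, h2]
    ring
end

section
/- Let G be a finite simple graph, g,f:V(G)→ℤ⁺ with g(x)≤f(x) for all x, and H a subgraph of G. If G admits all fractional (g,f)-factors excluding H, then for every subset S⊆V(G), setting T={x∈V(G)∖S : d_{G−S}(x)−d_H(x)+e_H(x,S)<f(x)}, one has g(S)+∑_{x∈T} d_{G−S}(x)−f(T) ≥ ∑_{x∈T} d_H(x)−e_H(S,T). -/
open Finset

/-- Necessity in Theorem 5: if `G` has all fractional `(g,f)`-factors excluding
`H`, then the deficiency condition holds. -/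
theorem stmt1 {V : Type*} [Fintype V] [DecidableEq V] (G H : SimpleGraph V)
    [DecidableRel G.Adj] [DecidableRel H.Adj]
    (g f : V → ℕ) (hg : ∀ x, 1 ≤ g x) (hgf : ∀ x, g x ≤ f x) (hHG : H ≤ G)
    (hall : HasAllFracExcl G H g f) :
    ∀ S T : Finset V,
      T = Sᶜ.filter (fun x =>
        (degOut G S x : ℤ) - H.degree x + eBtw H {x} S < f x) →
      (∑ x ∈ S, (g x : ℤ)) + ∑ x ∈ T, (degOut G S x : ℤ) - ∑ x ∈ T, (f x : ℤ)
        ≥ ∑ x ∈ T, (H.degree x : ℤ) - eBtw H S T := by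
  intro S T hT
  have hTsub : T ⊆ Sᶜ := by rw [hT]; exact filter_subset _ _
  set r : V → ℕ := fun x => if x ∈ S then g x else f x with hr
  have hrb : ∀ x, g x ≤ r x ∧ r x ≤ f x := by
    intro x
    refine ⟨?_, ?_⟩ <;> simp only [hr] <;> split_ifs <;> simp [hgf x]
  obtain ⟨h, hsym, hbd, hsupp, hdeg⟩ := hall r hrb
  -- real-valued key inequality
  have part1 : ∑ x ∈ T, ∑ y ∈ S, h x y ≤ ∑ y ∈ S, (g y : ℝ) := by
    rw [Finset.sum_comm]
    refine Finset.sum_le_sum fun y hy => ?_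
    have : ∑ x ∈ T, h x y = ∑ x ∈ T, h y x :=
      Finset.sum_congr rfl fun x _ => hsym x y
    rw [this]
    calc ∑ x ∈ T, h y x ≤ ∑ x : V, h y x := by
          refine Finset.sum_le_sum_of_subset_of_nonneg (subset_univ T)
            fun i _ _ => (hbd y i).1
      _ = (r y : ℝ) := hdeg y
      _ = (g y : ℝ) := by simp [hr, hy]
  have part2 : ∀ x, ∑ y ∈ Sᶜ, h x y ≤ ((Sᶜ.filter fun y => (G \ H).Adj x y).card : ℝ) := by
    intro x
    calc ∑ y ∈ Sᶜ, h x y ≤ ∑ y ∈ Sᶜ, (if (G \ H).Adj x y then (1:ℝ) else 0) := by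
          refine Finset.sum_le_sum fun y _ => ?_
          by_cases hadj : (G \ H).Adj x y
          · simp [hadj, (hbd x y).2]
          · simp [hadj, hsupp x y hadj]
      _ = ((Sᶜ.filter fun y => (G \ H).Adj x y).card : ℝ) := by
          rw [Finset.sum_boole]
  have key : ∑ x ∈ T, (f x : ℝ)
      ≤ ∑ x ∈ S, (g x : ℝ) + ∑ x ∈ T, ((Sᶜ.filter fun y => (G \ H).Adj x y).card : ℝ) := by
    have h1 : ∀ x ∈ T, (f x : ℝ) = ∑ y ∈ S, h x y + ∑ y ∈ Sᶜ, h x y := by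
      intro x hx
      have hxS : x ∉ S := by simpa using hTsub hx
      rw [Finset.sum_add_sum_compl, hdeg x]
      simp [hr, hxS]
    calc ∑ x ∈ T, (f x : ℝ)
        = ∑ x ∈ T, (∑ y ∈ S, h x y + ∑ y ∈ Sᶜ, h x y) := Finset.sum_congr rfl h1
      _ = ∑ x ∈ T, ∑ y ∈ S, h x y + ∑ x ∈ T, ∑ y ∈ Sᶜ, h x y := Finset.sum_add_distrib
      _ ≤ ∑ x ∈ S, (g x : ℝ) + ∑ x ∈ T, ((Sᶜ.filter fun y => (G \ H).Adj x y).card : ℝ) :=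
          add_le_add part1 (Finset.sum_le_sum fun x _ => part2 x)
  have keyZ : ∑ x ∈ T, (f x : ℤ)
      ≤ ∑ x ∈ S, (g x : ℤ) + ∑ x ∈ T, ((Sᶜ.filter fun y => (G \ H).Adj x y).card : ℤ) := by
    exact_mod_cast key
  -- per-vertex count identity
  have cardid : ∀ x, ((Sᶜ.filter fun y => (G \ H).Adj x y).card : ℤ)
      = (degOut G S x : ℤ) - (H.degree x : ℤ) + ((S.filter fun y => H.Adj x y).card : ℤ) := by
    intro x
    have n1 : (Sᶜ.filter fun y => H.Adj x y).card + (Sᶜ.filter fun y => (G \ H).Adj x y).card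
        = degOut G S x := by
      unfold degOut
      rw [← Finset.card_union_of_disjoint]
      · congr 1
        ext y
        simp only [Finset.mem_union, Finset.mem_filter, SimpleGraph.sdiff_adj]
        constructor
        · rintro (⟨hy, ha⟩ | ⟨hy, ha, _⟩)
          · exact ⟨hy, hHG ha⟩
          · exact ⟨hy, ha⟩
        · rintro ⟨hy, ha⟩
          by_cases hb : H.Adj x y
          · exact Or.inl ⟨hy, hb⟩
          · exact Or.inr ⟨hy, ha, hb⟩
      · rw [Finset.disjoint_left]
        intro a h1 h2
        simp only [Finset.mem_filter, SimpleGraph.sdiff_adj] at h1 h2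
        exact h2.2.2 h1.2
    have n2 : (S.filter fun y => H.Adj x y).card + (Sᶜ.filter fun y => H.Adj x y).card
        = H.degree x := by
      rw [← Finset.card_union_of_disjoint
        (Finset.disjoint_filter_filter disjoint_compl_right),
        ← Finset.filter_union, Finset.union_compl]
      rw [← SimpleGraph.neighborFinset_eq_filter, SimpleGraph.degree]
    omega
  -- sum of local eBtw equals eBtw S T
  have ebtw : ∑ x ∈ T, ((S.filter fun y => H.Adj x y).card : ℤ) = (eBtw H S T : ℤ) := by
    have : ∑ x ∈ T, (S.filter fun y => H.Adj x y).card = eBtw H S T := by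
      unfold eBtw
      simp only [Finset.card_filter]
      rw [Finset.sum_comm]
      refine Finset.sum_congr rfl fun y _ => Finset.sum_congr rfl fun x _ => ?_
      simp [SimpleGraph.adj_comm]
    exact_mod_cast this
  have sumcard : ∑ x ∈ T, ((Sᶜ.filter fun y => (G \ H).Adj x y).card : ℤ)
      = ∑ x ∈ T, (degOut G S x : ℤ) - ∑ x ∈ T, (H.degree x : ℤ) + (eBtw H S T : ℤ) := by
    rw [← ebtw, ← Finset.sum_sub_distrib, ← Finset.sum_add_distrib]
    exact Finset.sum_congr rfl fun x _ => cardid x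
  rw [sumcard] at keyZ
  linarith
end

section
/- Let G be a finite simple graph and g,f:V(G)→ℤ⁺ with g(x)≤f(x) for all x. Then G has all fractional (g,f)-factors (i.e., a fractional r-factor for every integer-valued r with g≤r≤f pointwise) if and only if for every S⊆V(G), with T={x∈V(G)∖S : d_{G−S}(x)<f(x)}, one has g(S)+∑_{x∈T} d_{G−S}(x)−f(T) ≥ 0. -/
open Finset

section Aux


variable {V : Type*} [Fintype V] [DecidableEq V]

/-- Feasible bipartite sub-flow. -/
def BFeas (G : SimpleGraph V) (r : V → ℕ) (w : V → V → ℝ) : Prop :=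
  (∀ x y, 0 ≤ w x y ∧ w x y ≤ 1) ∧ (∀ x y, ¬ G.Adj x y → w x y = 0) ∧
  (∀ x, ∑ y : V, w x y ≤ (r x : ℝ)) ∧ (∀ y, ∑ x : V, w x y ≤ (r y : ℝ))

/-- Residual reachability: `false` = reachable as a left (row) vertex,
`true` = reachable as a right (column) vertex. -/
inductive Reach (G : SimpleGraph V) (r : V → ℕ) (w : V → V → ℝ) : Bool → V → Prop
  | base (x : V) : (∑ y : V, w x y) < (r x : ℝ) → Reach G r w false x
  | toRight {x y : V} : Reach G r w false x → G.Adj x y → w x y < 1 → Reach G r w true y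
  | toLeft {x y : V} : Reach G r w true y → 0 < w x y → Reach G r w false x

private lemma sum_ite_row (x y a : V) :
    (∑ b' : V, (if a = x ∧ b' = y then (1:ℝ) else 0)) = if a = x then 1 else 0 := by
  by_cases hax : a = x <;> simp [hax]

private lemma sum_ite_col (x y b' : V) :
    (∑ a : V, (if a = x ∧ b' = y then (1:ℝ) else 0)) = if b' = y then 1 else 0 := by
  by_cases hby : b' = y <;> simp [hby]

/-- From reachability extract an augmenting direction `c`. -/
lemma reach_aux {G : SimpleGraph V} {r : V → ℕ} {w : V → V → ℝ}
    (hw : BFeas G r w) {b : Bool} {v : V} (hreach : Reach G r w b v) :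
    ∃ c : V → V → ℝ,
      (∀ a b', c a b' ≠ 0 → G.Adj a b') ∧
      (∀ a b', 0 < c a b' → w a b' < 1) ∧
      (∀ a b', c a b' < 0 → 0 < w a b') ∧
      (∀ a, 0 < (∑ b', c a b') → (∑ b', w a b') < (r a : ℝ)) ∧
      (b = true → ∀ b', (∑ a, c a b') = if b' = v then 1 else 0) ∧
      (b = false → ((∀ b', (∑ a, c a b') = 0) ∧
         ((∑ y', w v y') < (r v : ℝ) ∨ (∑ b', c v b') ≤ -1))) := by
  induction hreach with
  | base x hx =>
    exact ⟨0, fun a b' h => absurd rfl h, fun a b' h => absurd h (by simp),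
      fun a b' h => absurd h (by simp), fun a h => absurd h (by simp),
      fun h => by simp at h, fun _ => ⟨fun b' => by simp, Or.inl hx⟩⟩
  | toRight hx hadj hlt ih =>
    rename_i x y
    obtain ⟨c, hc1, hc2, hc3, hc4, _, hc6⟩ := ih
    obtain ⟨hcols, hdisj⟩ := hc6 rfl
    refine ⟨fun a b' => c a b' + if a = x ∧ b' = y then 1 else 0, ?_, ?_, ?_, ?_, ?_, ?_⟩
    · intro a b' h
      by_cases hab : a = x ∧ b' = y
      · rw [hab.1, hab.2]; exact hadj
      · simp only [hab, if_false, add_zero] at h; exact hc1 a b' h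
    · intro a b' h
      by_cases hab : a = x ∧ b' = y
      · rw [hab.1, hab.2]; exact hlt
      · simp only [hab, if_false, add_zero] at h; exact hc2 a b' h
    · intro a b' h
      by_cases hab : a = x ∧ b' = y
      · obtain ⟨rfl, rfl⟩ := hab
        apply hc3
        norm_num at h
        linarith
      · simp only [hab, if_false, add_zero] at h; exact hc3 a b' h
    · intro a h
      rw [Finset.sum_add_distrib, sum_ite_row x y a] at h
      by_cases hax : a = x
      · subst hax
        rcases hdisj with hd | hd
        · exact hd
        · exfalso; norm_num at h; linarith
      · simp only [hax, if_false, add_zero] at h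
        exact hc4 a h
    · intro _ b'
      rw [Finset.sum_add_distrib, sum_ite_col x y b', hcols b', zero_add]
    · intro h; exact absurd h (by simp)
  | toLeft hy hpos ih =>
    rename_i x y
    obtain ⟨c, hc1, hc2, hc3, hc4, hc5, _⟩ := ih
    have hcols := hc5 rfl
    have hadj : G.Adj x y := by
      by_contra hna
      have := hw.2.1 x y hna
      linarith
    refine ⟨fun a b' => c a b' - if a = x ∧ b' = y then 1 else 0, ?_, ?_, ?_, ?_, ?_, ?_⟩
    · intro a b' h
      by_cases hab : a = x ∧ b' = y
      · rw [hab.1, hab.2]; exact hadj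
      · simp only [hab, if_false, sub_zero] at h; exact hc1 a b' h
    · intro a b' h
      by_cases hab : a = x ∧ b' = y
      · obtain ⟨rfl, rfl⟩ := hab
        apply hc2
        norm_num at h
        linarith
      · simp only [hab, if_false, sub_zero] at h; exact hc2 a b' h
    · intro a b' h
      by_cases hab : a = x ∧ b' = y
      · rw [hab.1, hab.2]; exact hpos
      · simp only [hab, if_false, sub_zero] at h; exact hc3 a b' h
    · intro a h
      rw [Finset.sum_sub_distrib, sum_ite_row x y a] at h
      by_cases hax : a = x
      · subst hax
        apply hc4
        norm_num at h
        linarith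
      · simp only [hax, if_false, sub_zero] at h
        exact hc4 a h
    · intro h; exact absurd h (by simp)
    · intro _
      constructor
      · intro b'
        rw [Finset.sum_sub_distrib, sum_ite_col x y b', hcols b']
        by_cases hby : b' = y <;> simp [hby]
      · by_cases hlt : 0 < (∑ b', c x b')
        · exact Or.inl (hc4 x hlt)
        · right
          push_neg at hlt
          rw [Finset.sum_sub_distrib, sum_ite_row x y x, if_pos rfl]
          linarith

/-- At a maximiser of total weight, every reachable column is full. -/
lemma col_full {G : SimpleGraph V} {r : V → ℕ} {w : V → V → ℝ}
    (hw : BFeas G r w)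
    (hmax : ∀ w', BFeas G r w' → (∑ x : V, ∑ y : V, w' x y) ≤ ∑ x : V, ∑ y : V, w x y)
    {y : V} (hy : Reach G r w true y) : (∑ x : V, w x y) = (r y : ℝ) := by
  by_contra hne
  have hlt : (∑ x : V, w x y) < (r y : ℝ) := lt_of_le_of_ne (hw.2.2.2 y) hne
  obtain ⟨c, hc1, hc2, hc3, hc4, hc5, _⟩ := reach_aux hw hy
  have hcols := hc5 rfl
  set e1 : V × V → ℝ := fun p => if 0 < c p.1 p.2 then (1 - w p.1 p.2) / c p.1 p.2 else 1 with he1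
  set e2 : V × V → ℝ := fun p => if c p.1 p.2 < 0 then w p.1 p.2 / (-(c p.1 p.2)) else 1 with he2
  set e3 : V → ℝ := fun a => if 0 < ∑ b' : V, c a b' then ((r a : ℝ) - ∑ b' : V, w a b') / (∑ b' : V, c a b') else 1 with he3
  set s : Finset ℝ := insert ((r y : ℝ) - ∑ x : V, w x y)
    ((Finset.univ.image e1) ∪ (Finset.univ.image e2) ∪ (Finset.univ.image e3)) with hs
  have hsne : s.Nonempty := ⟨_, Finset.mem_insert_self _ _⟩
  set ε := s.min' hsne with hε
  have hposall : ∀ z ∈ s, 0 < z := by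
    intro z hz
    rw [hs] at hz
    rcases Finset.mem_insert.mp hz with h | h
    · rw [h]; linarith
    · rcases Finset.mem_union.mp h with h | h
      · rcases Finset.mem_union.mp h with h | h
        · obtain ⟨p, _, hp⟩ := Finset.mem_image.mp h
          rw [← hp, he1]
          by_cases hc : 0 < c p.1 p.2
          · simp only [hc, if_true]
            have := hc2 p.1 p.2 hc
            apply div_pos <;> linarith
          · simp [hc]
        · obtain ⟨p, _, hp⟩ := Finset.mem_image.mp h
          rw [← hp, he2]
          by_cases hc : c p.1 p.2 < 0
          · simp only [hc, if_true]
            have := hc3 p.1 p.2 hc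
            apply div_pos <;> linarith
          · simp [hc]
      · obtain ⟨a, _, ha⟩ := Finset.mem_image.mp h
        rw [← ha, he3]
        by_cases hc : 0 < ∑ b' : V, c a b'
        · simp only [hc, if_true]
          have := hc4 a hc
          apply div_pos <;> linarith
        · simp [hc]
  have hεpos : 0 < ε := hposall ε (Finset.min'_mem s hsne)
  have hεy : ε ≤ (r y : ℝ) - ∑ x : V, w x y :=
    Finset.min'_le s _ (Finset.mem_insert_self _ _)
  have hεe1 : ∀ a b', ε ≤ e1 (a, b') := fun a b' =>
    Finset.min'_le s _ (Finset.mem_insert_of_mem (Finset.mem_union_left _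
      (Finset.mem_union_left _ (Finset.mem_image_of_mem e1 (Finset.mem_univ (a, b'))))))
  have hεe2 : ∀ a b', ε ≤ e2 (a, b') := fun a b' =>
    Finset.min'_le s _ (Finset.mem_insert_of_mem (Finset.mem_union_left _
      (Finset.mem_union_right _ (Finset.mem_image_of_mem e2 (Finset.mem_univ (a, b'))))))
  have hεe3 : ∀ a, ε ≤ e3 a := fun a =>
    Finset.min'_le s _ (Finset.mem_insert_of_mem (Finset.mem_union_right _
      (Finset.mem_image_of_mem e3 (Finset.mem_univ a))))
  -- the perturbed flow
  set w' : V → V → ℝ := fun a b' => w a b' + ε * c a b' with hw'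
  have hw'feas : BFeas G r w' := by
    refine ⟨?_, ?_, ?_, ?_⟩
    · intro a b'
      rcases lt_trichotomy (c a b') 0 with hc | hc | hc
      · constructor
        · have h2 := hεe2 a b'
          rw [he2] at h2
          simp only [hc, if_true] at h2
          have : ε * (-(c a b')) ≤ w a b' :=
            (le_div_iff₀ (by linarith : (0:ℝ) < -(c a b'))).mp h2
          simp only [hw']
          nlinarith
        · have := (hw.1 a b').2
          simp only [hw']
          nlinarith
      · simp [hw', hc, (hw.1 a b').1, (hw.1 a b').2]
      · constructor
        · have := (hw.1 a b').1
          simp only [hw']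
          nlinarith
        · have h1 := hεe1 a b'
          rw [he1] at h1
          simp only [hc, if_true] at h1
          have : ε * (c a b') ≤ 1 - w a b' := by
            rw [← le_div_iff₀ hc]
            exact h1
          simp only [hw']
          linarith
    · intro a b' hna
      have hcz : c a b' = 0 := by
        by_contra hcz
        exact hna (hc1 a b' hcz)
      simp [hw', hcz, hw.2.1 a b' hna]
    · intro a
      have hsum : (∑ b' : V, w' a b') = (∑ b' : V, w a b') + ε * ∑ b' : V, c a b' := by
        simp only [hw', Finset.sum_add_distrib, Finset.mul_sum]
      rw [hsum]
      by_cases hc : 0 < ∑ b' : V, c a b'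
      · have h3 := hεe3 a
        rw [he3] at h3
        simp only [hc, if_true] at h3
        have : ε * (∑ b' : V, c a b') ≤ (r a : ℝ) - ∑ b' : V, w a b' := by
          rw [← le_div_iff₀ hc]
          exact h3
        linarith
      · push_neg at hc
        have : ε * (∑ b' : V, c a b') ≤ 0 := mul_nonpos_of_nonneg_of_nonpos (le_of_lt hεpos) hc
        have := hw.2.2.1 a
        linarith
    · intro b'
      have hsum : (∑ a : V, w' a b') = (∑ a : V, w a b') + ε * ∑ a : V, c a b' := by
        simp only [hw', Finset.sum_add_distrib, Finset.mul_sum]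
      rw [hsum, hcols b']
      by_cases hby : b' = y
      · subst hby
        norm_num
        linarith
      · simp only [hby, if_false, mul_zero, add_zero]
        exact hw.2.2.2 b'
  have hsum' : (∑ x : V, ∑ y' : V, w' x y') = (∑ x : V, ∑ y' : V, w x y') + ε := by
    have : (∑ x : V, ∑ y' : V, c x y') = 1 := by
      rw [Finset.sum_comm]
      have : ∀ y' : V, (∑ a : V, c a y') = if y' = y then 1 else 0 := hcols
      rw [Finset.sum_congr rfl (fun y' _ => this y')]
      simp
    have h9 : (∑ x : V, ∑ y' : V, ε * c x y') = ε * ∑ x : V, ∑ y' : V, c x y' := by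
      simp only [← Finset.mul_sum]
    simp only [hw', Finset.sum_add_distrib]
    rw [h9, this, mul_one]
  have := hmax w' hw'feas
  linarith

lemma exists_of_Q (G : SimpleGraph V) [DecidableRel G.Adj] (r : V → ℕ)
    (Q : ∀ B : Finset V,
      (∑ x : V, max 0 ((r x : ℤ) - degOut G B x)) ≤ ∑ x ∈ B, (r x : ℤ)) :
    ∃ h : V → V → ℝ, (∀ x y, h x y = h y x) ∧ (∀ x y, 0 ≤ h x y ∧ h x y ≤ 1) ∧
      (∀ x y, ¬ G.Adj x y → h x y = 0) ∧ ∀ x : V, ∑ y : V, h x y = (r x : ℝ) := by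
  classical
  set K : Set (V → V → ℝ) := {w | BFeas G r w} with hK
  have hc : ∀ x y : V, Continuous fun w : V → V → ℝ => w x y :=
    fun x y => (continuous_apply y).comp (continuous_apply x)
  have hKclosed : IsClosed K := by
    have h1 : IsClosed {w : V → V → ℝ | ∀ x y, 0 ≤ w x y ∧ w x y ≤ 1} := by
      have : {w : V → V → ℝ | ∀ x y, 0 ≤ w x y ∧ w x y ≤ 1}
          = ⋂ x, ⋂ y, ({w : V → V → ℝ | 0 ≤ w x y} ∩ {w | w x y ≤ 1}) := by
        ext w; simp only [Set.mem_setOf_eq, Set.mem_iInter, Set.mem_inter_iff]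
      rw [this]
      exact isClosed_iInter fun x => isClosed_iInter fun y =>
        (isClosed_le continuous_const (hc x y)).inter (isClosed_le (hc x y) continuous_const)
    have h2 : IsClosed {w : V → V → ℝ | ∀ x y, ¬ G.Adj x y → w x y = 0} := by
      have : {w : V → V → ℝ | ∀ x y, ¬ G.Adj x y → w x y = 0}
          = ⋂ x, ⋂ y, {w : V → V → ℝ | ¬ G.Adj x y → w x y = 0} := by
        ext w; simp only [Set.mem_setOf_eq, Set.mem_iInter]
      rw [this]
      refine isClosed_iInter fun x => isClosed_iInter fun y => ?_
      by_cases hadj : G.Adj x y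
      · have : {w : V → V → ℝ | ¬ G.Adj x y → w x y = 0} = Set.univ := by
          ext w; simp [hadj]
        rw [this]; exact isClosed_univ
      · have : {w : V → V → ℝ | ¬ G.Adj x y → w x y = 0} = {w | w x y = 0} := by
          ext w; simp [hadj]
        rw [this]; exact isClosed_eq (hc x y) continuous_const
    have h3 : IsClosed {w : V → V → ℝ | ∀ x, (∑ y : V, w x y) ≤ (r x : ℝ)} := by
      have : {w : V → V → ℝ | ∀ x, (∑ y : V, w x y) ≤ (r x : ℝ)}
          = ⋂ x, {w : V → V → ℝ | (∑ y : V, w x y) ≤ (r x : ℝ)} := by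
        ext w; simp only [Set.mem_setOf_eq, Set.mem_iInter]
      rw [this]
      exact isClosed_iInter fun x =>
        isClosed_le (by exact continuous_finset_sum _ fun y _ => hc x y) continuous_const
    have h4 : IsClosed {w : V → V → ℝ | ∀ y, (∑ x : V, w x y) ≤ (r y : ℝ)} := by
      have : {w : V → V → ℝ | ∀ y, (∑ x : V, w x y) ≤ (r y : ℝ)}
          = ⋂ y, {w : V → V → ℝ | (∑ x : V, w x y) ≤ (r y : ℝ)} := by
        ext w; simp only [Set.mem_setOf_eq, Set.mem_iInter]
      rw [this]
      exact isClosed_iInter fun y =>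
        isClosed_le (by exact continuous_finset_sum _ fun x _ => hc x y) continuous_const
    have : K = {w : V → V → ℝ | ∀ x y, 0 ≤ w x y ∧ w x y ≤ 1}
        ∩ ({w | ∀ x y, ¬ G.Adj x y → w x y = 0}
        ∩ ({w | ∀ x, (∑ y : V, w x y) ≤ (r x : ℝ)}
        ∩ {w | ∀ y, (∑ x : V, w x y) ≤ (r y : ℝ)})) := by
      ext w
      simp only [hK, Set.mem_setOf_eq, Set.mem_inter_iff, BFeas]
    rw [this]
    exact h1.inter (h2.inter (h3.inter h4))
  have hKcompact : IsCompact K := by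
    have hbox : IsCompact (Set.univ.pi fun _ : V => Set.univ.pi fun _ : V => Set.Icc (0:ℝ) 1) :=
      isCompact_univ_pi fun _ => isCompact_univ_pi fun _ => isCompact_Icc
    apply IsCompact.of_isClosed_subset hbox hKclosed
    intro w hw
    simp only [Set.mem_pi, Set.mem_univ, forall_true_left, Set.mem_Icc]
    intro x y
    exact hw.1 x y
  have h0K : (0 : V → V → ℝ) ∈ K := by
    refine ⟨fun x y => by norm_num, fun x y _ => rfl, fun x => ?_, fun y => ?_⟩
    · simp
    · simp
  have hFcont : Continuous fun w : V → V → ℝ => ∑ x : V, ∑ y : V, w x y :=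
    continuous_finset_sum _ fun x _ => continuous_finset_sum _ fun y _ => hc x y
  obtain ⟨w, hwK, hwmax⟩ := hKcompact.exists_isMaxOn ⟨0, h0K⟩ hFcont.continuousOn
  have hw : BFeas G r w := hwK
  have hmax : ∀ w', BFeas G r w' → (∑ x : V, ∑ y : V, w' x y) ≤ ∑ x : V, ∑ y : V, w x y :=
    fun w' hw' => hwmax hw'
  -- total weight is full
  have hfull : (∑ x : V, ∑ y : V, w x y) = ∑ x : V, (r x : ℝ) := by
    have hle : (∑ x : V, ∑ y : V, w x y) ≤ ∑ x : V, (r x : ℝ) :=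
      Finset.sum_le_sum fun x _ => hw.2.2.1 x
    rcases eq_or_lt_of_le hle with heq | hlt
    · exact heq
    exfalso
    set A : Finset V := Finset.univ.filter (fun x => Reach G r w false x) with hA
    set B : Finset V := Finset.univ.filter (fun y => Reach G r w true y) with hB
    have f1 : ∀ x, x ∉ A → (∑ y : V, w x y) = (r x : ℝ) := by
      intro x hx
      rcases eq_or_lt_of_le (hw.2.2.1 x) with h | h
      · exact h
      · exact absurd (Finset.mem_filter.mpr ⟨Finset.mem_univ x, Reach.base x h⟩) hx
    have f2 : ∀ x ∈ A, ∀ y, y ∉ B → w x y = (if G.Adj x y then (1:ℝ) else 0) := by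
      intro x hxA y hyB
      by_cases hadj : G.Adj x y
      · rw [if_pos hadj]
        rcases eq_or_lt_of_le (hw.1 x y).2 with h | h
        · exact h
        · exact absurd (Finset.mem_filter.mpr ⟨Finset.mem_univ y,
            Reach.toRight (Finset.mem_filter.mp hxA).2 hadj h⟩) hyB
      · rw [if_neg hadj]; exact hw.2.1 x y hadj
    have f3 : ∀ y ∈ B, ∀ x, x ∉ A → w x y = 0 := by
      intro y hyB x hxA
      rcases eq_or_lt_of_le (hw.1 x y).1 with h | h
      · exact h.symm
      · exact absurd (Finset.mem_filter.mpr ⟨Finset.mem_univ x,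
          Reach.toLeft (Finset.mem_filter.mp hyB).2 h⟩) hxA
    have f4 : ∀ y ∈ B, (∑ x : V, w x y) = (r y : ℝ) :=
      fun y hyB => col_full hw hmax (Finset.mem_filter.mp hyB).2
    -- compute total
    have E3 : ∀ x ∈ A, (∑ y : V, w x y) = (∑ y ∈ B, w x y) + (degOut G B x : ℝ) := by
      intro x hxA
      rw [← Finset.sum_add_sum_compl B (w x)]
      congr 1
      have : ∀ y ∈ Bᶜ, w x y = (if G.Adj x y then (1:ℝ) else 0) :=
        fun y hy => f2 x hxA y (Finset.mem_compl.mp hy)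
      rw [Finset.sum_congr rfl this, Finset.sum_boole, degOut]
    have E4 : (∑ x ∈ A, ∑ y ∈ B, w x y) = ∑ y ∈ B, (r y : ℝ) := by
      rw [Finset.sum_comm]
      apply Finset.sum_congr rfl
      intro y hyB
      rw [← f4 y hyB]
      apply Finset.sum_subset (Finset.subset_univ A)
      intro x _ hxA
      exact f3 y hyB x hxA
    have Etot : (∑ x : V, ∑ y : V, w x y)
        = (∑ y ∈ B, (r y : ℝ)) + (∑ x ∈ A, (degOut G B x : ℝ)) + ∑ x ∈ Aᶜ, (r x : ℝ) := by
      rw [← Finset.sum_add_sum_compl A (fun x => ∑ y : V, w x y)]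
      rw [Finset.sum_congr rfl E3, Finset.sum_add_distrib, E4]
      congr 1
      exact Finset.sum_congr rfl fun x hx => f1 x (Finset.mem_compl.mp hx)
    have Er : (∑ x : V, (r x : ℝ)) = (∑ x ∈ A, (r x : ℝ)) + ∑ x ∈ Aᶜ, (r x : ℝ) :=
      (Finset.sum_add_sum_compl A _).symm
    rw [Etot, Er] at hlt
    have hR : (∑ y ∈ B, (r y : ℝ)) + (∑ x ∈ A, (degOut G B x : ℝ)) < ∑ x ∈ A, (r x : ℝ) := by
      linarith
    have hZ : (∑ y ∈ B, (r y : ℤ)) + (∑ x ∈ A, (degOut G B x : ℤ)) < ∑ x ∈ A, (r x : ℤ) := by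
      exact_mod_cast hR
    have hQB := Q B
    have c1 : (∑ x ∈ A, ((r x : ℤ) - degOut G B x)) ≤ ∑ x : V, max 0 ((r x : ℤ) - degOut G B x) := by
      calc (∑ x ∈ A, ((r x : ℤ) - degOut G B x))
          ≤ ∑ x ∈ A, max 0 ((r x : ℤ) - degOut G B x) :=
            Finset.sum_le_sum fun x _ => le_max_right _ _
        _ ≤ ∑ x : V, max 0 ((r x : ℤ) - degOut G B x) :=
            Finset.sum_le_sum_of_subset_of_nonneg (Finset.subset_univ A)
              (fun x _ _ => le_max_left _ _)
    rw [Finset.sum_sub_distrib] at c1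
    omega
  -- rows are exactly full
  have hrows : ∀ x, (∑ y : V, w x y) = (r x : ℝ) := by
    have := (Finset.sum_eq_sum_iff_of_le (fun x (_ : x ∈ Finset.univ) => hw.2.2.1 x)).mp hfull
    intro x; exact this x (Finset.mem_univ x)
  have hcolsum : (∑ y : V, ∑ x : V, w x y) = ∑ y : V, (r y : ℝ) := by
    rw [Finset.sum_comm]; exact hfull
  have hcols : ∀ y, (∑ x : V, w x y) = (r y : ℝ) := by
    have := (Finset.sum_eq_sum_iff_of_le (fun y (_ : y ∈ Finset.univ) => hw.2.2.2 y)).mp hcolsum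
    intro y; exact this y (Finset.mem_univ y)
  -- symmetrize
  refine ⟨fun x y => (w x y + w y x) / 2, fun x y => by ring, fun x y => ?_, fun x y hna => ?_, fun x => ?_⟩
  · constructor
    · show (0:ℝ) ≤ (w x y + w y x) / 2
      have := (hw.1 x y).1; have := (hw.1 y x).1; linarith
    · show (w x y + w y x) / 2 ≤ 1
      have := (hw.1 x y).2; have := (hw.1 y x).2; linarith
  · have h1 := hw.2.1 x y hna
    have h2 := hw.2.1 y x (fun h => hna h.symm)
    show (w x y + w y x) / 2 = 0
    rw [h1, h2]; norm_num
  · show (∑ y : V, (w x y + w y x) / 2) = (r x : ℝ)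
    have : (∑ y : V, (w x y + w y x) / 2) = ((∑ y : V, w x y) + ∑ y : V, w y x) / 2 := by
      rw [← Finset.sum_add_distrib, ← Finset.sum_div]
    rw [this, hrows x, hcols x]
    ring

end Aux

section Comb


variable {V : Type*} [Fintype V] [DecidableEq V] (G : SimpleGraph V)
    [DecidableRel G.Adj]

-- P from Lu
lemma P_of_Lu (g f r : V → ℕ) (hr : ∀ x, g x ≤ r x ∧ r x ≤ f x)
    (lu : ∀ S T : Finset V, T = Sᶜ.filter (fun x => degOut G S x < f x) →
        (∑ x ∈ S, (g x : ℤ)) + ∑ x ∈ T, (degOut G S x : ℤ) - ∑ x ∈ T, (f x : ℤ) ≥ 0) :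
    ∀ S : Finset V,
      (∑ x ∈ Sᶜ, max 0 ((r x : ℤ) - degOut G S x)) ≤ ∑ x ∈ S, (r x : ℤ) := by
  intro S
  set T := Sᶜ.filter (fun x => degOut G S x < f x) with hT
  have h1 : (∑ x ∈ Sᶜ, max 0 ((r x : ℤ) - degOut G S x))
      ≤ ∑ x ∈ Sᶜ, max 0 ((f x : ℤ) - degOut G S x) := by
    apply Finset.sum_le_sum
    intro x _
    have h := (hr x).2
    have : (r x : ℤ) ≤ f x := by exact_mod_cast h
    omega
  have h2 : (∑ x ∈ Sᶜ, max 0 ((f x : ℤ) - degOut G S x))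
      = ∑ x ∈ T, ((f x : ℤ) - degOut G S x) := by
    rw [hT, Finset.sum_filter]
    apply Finset.sum_congr rfl
    intro x _
    by_cases hx : degOut G S x < f x
    · have : (degOut G S x : ℤ) < f x := by exact_mod_cast hx
      simp only [hx, if_true]; omega
    · have : (f x : ℤ) ≤ degOut G S x := by exact_mod_cast Nat.le_of_not_lt hx
      simp only [hx, if_false]; omega
  have h3 := lu S T hT
  have h4 : (∑ x ∈ S, (g x : ℤ)) ≤ ∑ x ∈ S, (r x : ℤ) := by
    apply Finset.sum_le_sum; intro x _; exact_mod_cast (hr x).1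
  have h5 : (∑ x ∈ T, ((f x : ℤ) - degOut G S x)) ≤ ∑ x ∈ S, (g x : ℤ) := by
    rw [Finset.sum_sub_distrib]; omega
  omega

-- degOut additivity when removing W ⊆ B
lemma degOut_sdiff (B W : Finset V) (hW : W ⊆ B) (x : V) :
    degOut G (B \ W) x = degOut G B x + (W.filter fun y => G.Adj x y).card := by
  unfold degOut
  have hcompl : (B \ W)ᶜ = Bᶜ ∪ W := by
    ext y
    simp only [Finset.mem_compl, Finset.mem_sdiff, Finset.mem_union]
    by_cases hy : y ∈ B <;> by_cases hy2 : y ∈ W <;> simp [hy, hy2]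
  rw [hcompl, Finset.filter_union]
  rw [Finset.card_union_of_disjoint]
  apply Finset.disjoint_filter_filter
  rw [Finset.disjoint_left]
  intro a ha hb
  exact (Finset.mem_compl.mp ha) (hW hb)

-- Q from P
lemma Q_of_P (r : V → ℕ)
    (P : ∀ S : Finset V,
      (∑ x ∈ Sᶜ, max 0 ((r x : ℤ) - degOut G S x)) ≤ ∑ x ∈ S, (r x : ℤ)) :
    ∀ B : Finset V,
      (∑ x : V, max 0 ((r x : ℤ) - degOut G B x)) ≤ ∑ x ∈ B, (r x : ℤ) := by
  intro B
  induction B using Finset.strongInduction with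
  | _ B ih =>
  set W := B.filter (fun v => degOut G B v < r v) with hWdef
  have hWB : W ⊆ B := Finset.filter_subset _ _
  by_cases hW : W = ∅
  · -- all x in B are non-deficient
    have hB0 : ∀ x ∈ B, max 0 ((r x : ℤ) - degOut G B x) = 0 := by
      intro x hx
      have hxW : x ∉ W := by rw [hW]; exact Finset.notMem_empty x
      have : ¬ degOut G B x < r x := by
        intro hc; exact hxW (by rw [hWdef]; exact Finset.mem_filter.mpr ⟨hx, hc⟩)
      have : (r x : ℤ) ≤ degOut G B x := by exact_mod_cast Nat.le_of_not_lt this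
      omega
    have := P B
    calc (∑ x : V, max 0 ((r x : ℤ) - degOut G B x))
        = (∑ x ∈ B, max 0 ((r x : ℤ) - degOut G B x))
          + ∑ x ∈ Bᶜ, max 0 ((r x : ℤ) - degOut G B x) := by
          rw [Finset.sum_add_sum_compl]
      _ = ∑ x ∈ Bᶜ, max 0 ((r x : ℤ) - degOut G B x) := by
          rw [Finset.sum_congr rfl hB0]; simp
      _ ≤ ∑ x ∈ B, (r x : ℤ) := P B
  · -- remove W
    have hWne : W.Nonempty := Finset.nonempty_of_ne_empty hW
    set B' := B \ W with hB'
    have hsub : B' ⊂ B := by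
      rw [hB']
      apply Finset.sdiff_ssubset hWB hWne
    have IH := ih B' hsub
    -- pointwise bounds
    have key : (∑ x : V, max 0 ((r x : ℤ) - degOut G B x))
        ≤ (∑ x : V, max 0 ((r x : ℤ) - degOut G B' x)) + ∑ v ∈ W, (r v : ℤ) := by
      have ptW : ∀ x ∈ W, max 0 ((r x : ℤ) - degOut G B x)
          ≤ max 0 ((r x : ℤ) - degOut G B' x) + ((r x : ℤ) - degOut G B x) := by
        intro x hx
        have hx' : x ∈ B.filter (fun v => degOut G B v < r v) := by rwa [← hWdef]
        have : degOut G B x < r x := (Finset.mem_filter.mp hx').2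
        have h1 : (degOut G B x : ℤ) < r x := by exact_mod_cast this
        omega
      have ptB : ∀ x ∈ B \ W, max 0 ((r x : ℤ) - degOut G B x)
          ≤ max 0 ((r x : ℤ) - degOut G B' x) := by
        intro x hx
        obtain ⟨hxB, hxW⟩ := Finset.mem_sdiff.mp hx
        have : ¬ degOut G B x < r x := by
          intro hc; exact hxW (by rw [hWdef]; exact Finset.mem_filter.mpr ⟨hxB, hc⟩)
        have : (r x : ℤ) ≤ degOut G B x := by exact_mod_cast Nat.le_of_not_lt this
        omega
      have ptC : ∀ x ∈ Bᶜ, max 0 ((r x : ℤ) - degOut G B x)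
          ≤ max 0 ((r x : ℤ) - degOut G B' x) + ((W.filter fun y => G.Adj x y).card : ℤ) := by
        intro x _
        have := degOut_sdiff G B W hWB x
        have h2 : (degOut G B' x : ℤ) = degOut G B x + ((W.filter fun y => G.Adj x y).card : ℤ) := by
          rw [hB']; exact_mod_cast this
        omega
      -- sum over univ = B ∪ Bᶜ, B = W ∪ (B\W)
      have split : ∀ φ : V → ℤ, (∑ x : V, φ x) = (∑ x ∈ W, φ x) + (∑ x ∈ B \ W, φ x) + ∑ x ∈ Bᶜ, φ x := by
        intro φ
        rw [← Finset.sum_add_sum_compl B φ]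
        congr 1
        rw [← Finset.sum_union (Finset.disjoint_sdiff)]
        congr 1
        rw [Finset.union_sdiff_of_subset hWB]
      rw [split, split (fun x => max 0 ((r x : ℤ) - degOut G B' x))]
      have douW : (∑ x ∈ Bᶜ, ((W.filter fun y => G.Adj x y).card : ℤ))
          = ∑ v ∈ W, (degOut G B v : ℤ) := by
        unfold degOut
        simp only [Finset.card_filter]
        push_cast
        rw [Finset.sum_comm]
        apply Finset.sum_congr rfl
        intro v _
        apply Finset.sum_congr rfl
        intro x _
        congr 1
        rw [SimpleGraph.adj_comm]
      have s1 := Finset.sum_le_sum ptW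
      have s2 := Finset.sum_le_sum ptB
      have s3 := Finset.sum_le_sum ptC
      rw [Finset.sum_add_distrib] at s1 s3
      have s4 : (∑ x ∈ W, ((r x : ℤ) - degOut G B x))
          = (∑ x ∈ W, (r x : ℤ)) - ∑ x ∈ W, (degOut G B x : ℤ) :=
        Finset.sum_sub_distrib _ _
      linarith [s1, s2, s3]
    calc (∑ x : V, max 0 ((r x : ℤ) - degOut G B x))
        ≤ (∑ x : V, max 0 ((r x : ℤ) - degOut G B' x)) + ∑ v ∈ W, (r v : ℤ) := key
      _ ≤ (∑ x ∈ B', (r x : ℤ)) + ∑ v ∈ W, (r v : ℤ) := by omega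
      _ = ∑ x ∈ B, (r x : ℤ) := by
          rw [hB', ← Finset.sum_union Finset.sdiff_disjoint, Finset.sdiff_union_of_subset hWB]

end Comb

-- Forward direction
private theorem lu_forward {V : Type*} [Fintype V] [DecidableEq V] (G : SimpleGraph V)
    [DecidableRel G.Adj]
    (g f : V → ℕ) (hgf : ∀ x, g x ≤ f x) (hall : HasAllFrac G g f) :
    ∀ S T : Finset V, T = Sᶜ.filter (fun x => degOut G S x < f x) →
      (∑ x ∈ S, (g x : ℤ)) + ∑ x ∈ T, (degOut G S x : ℤ) - ∑ x ∈ T, (f x : ℤ) ≥ 0 := by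
  intro S T hT
  have hTS : ∀ x ∈ T, x ∉ S := by
    intro x hx
    rw [hT] at hx
    have := (Finset.mem_filter.mp hx).1
    simpa [Finset.mem_compl] using this
  set r : V → ℕ := fun x => if x ∈ T then f x else g x with hrdef
  have hr : ∀ x, g x ≤ r x ∧ r x ≤ f x := by
    intro x; by_cases hx : x ∈ T <;> simp [hrdef, hx, hgf x, le_refl]
  obtain ⟨h, hsym, hbd, hsupp, hdeg⟩ := hall r hr
  have h0 : ∀ x y, 0 ≤ h x y := fun x y => (hbd x y).1
  -- key real inequality
  have key : (∑ x ∈ T, (f x : ℝ)) ≤ (∑ x ∈ S, (g x : ℝ)) + ∑ x ∈ T, (degOut G S x : ℝ) := by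
    have e1 : (∑ x ∈ T, (f x : ℝ)) = ∑ x ∈ T, ∑ y : V, h x y := by
      apply Finset.sum_congr rfl
      intro x hx
      rw [hdeg x, hrdef]; simp [hx]
    rw [e1]
    have e2 : ∀ x, (∑ y : V, h x y) = (∑ y ∈ S, h x y) + ∑ y ∈ Sᶜ, h x y := by
      intro x
      rw [← Finset.sum_add_sum_compl S]
    calc ∑ x ∈ T, ∑ y : V, h x y
        = (∑ x ∈ T, ∑ y ∈ S, h x y) + ∑ x ∈ T, ∑ y ∈ Sᶜ, h x y := by
          rw [← Finset.sum_add_distrib]; exact Finset.sum_congr rfl fun x _ => e2 x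
      _ ≤ (∑ x ∈ S, (g x : ℝ)) + ∑ x ∈ T, (degOut G S x : ℝ) := by
          gcongr with x hx
          · -- ∑ x ∈ T, ∑ y ∈ S, h x y ≤ ∑ y ∈ S, g y
            rw [Finset.sum_comm]
            apply Finset.sum_le_sum
            intro y hy
            have : (∑ x ∈ T, h x y) ≤ ∑ x : V, h x y := by
              apply Finset.sum_le_sum_of_subset_of_nonneg (Finset.subset_univ T)
              intro i _ _; exact h0 i y
            calc (∑ x ∈ T, h x y) ≤ ∑ x : V, h x y := this
              _ = ∑ x : V, h y x := by
                  apply Finset.sum_congr rfl; intro x _; rw [hsym x y]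
              _ = (r y : ℝ) := hdeg y
              _ = (g y : ℝ) := by
                  have : y ∉ T := fun hc => hTS y hc hy
                  simp [hrdef, this]
          · -- ∑ y ∈ Sᶜ, h x y ≤ degOut S x
            have e3 : (∑ y ∈ Sᶜ, h x y) = ∑ y ∈ Sᶜ.filter (fun y => G.Adj x y), h x y := by
              symm
              apply Finset.sum_subset (Finset.filter_subset _ _)
              intro y hy hny
              exact hsupp x y (by simpa [Finset.mem_filter, hy] using hny)
            rw [e3, degOut]
            calc (∑ y ∈ Sᶜ.filter (fun y => G.Adj x y), h x y)
                ≤ ∑ _y ∈ Sᶜ.filter (fun y => G.Adj x y), (1:ℝ) :=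
                  Finset.sum_le_sum fun y _ => (hbd x y).2
              _ = ((Sᶜ.filter (fun y => G.Adj x y)).card : ℝ) := by simp
  have : (∑ x ∈ T, (f x : ℤ)) ≤ (∑ x ∈ S, (g x : ℤ)) + ∑ x ∈ T, (degOut G S x : ℤ) := by
    exact_mod_cast key
  omega

/-- Lu's theorem (Theorem 4): `G` has all fractional `(g,f)`-factors iff the
deficiency condition holds for every `S`. -/
theorem stmt2 {V : Type*} [Fintype V] [DecidableEq V] (G : SimpleGraph V)
    [DecidableRel G.Adj]
    (g f : V → ℕ) (hg : ∀ x, 1 ≤ g x) (hgf : ∀ x, g x ≤ f x) :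
    HasAllFrac G g f ↔
      ∀ S T : Finset V, T = Sᶜ.filter (fun x => degOut G S x < f x) →
        (∑ x ∈ S, (g x : ℤ)) + ∑ x ∈ T, (degOut G S x : ℤ) - ∑ x ∈ T, (f x : ℤ) ≥ 0 := by
  constructor
  · intro hall
    exact lu_forward G g f hgf hall
  · intro lu r hr
    have hP := P_of_Lu G g f r hr lu
    have hQ := Q_of_P G r hP
    obtain ⟨h, h1, h2, h3, h4⟩ := exists_of_Q G r hQ
    exact ⟨h, h1, h2, h3, h4⟩
end

section
/- Let G be a finite simple graph, F a complete-factor of G with ω(F)≥2 components, g,f:V(G)→ℤ⁺ with g(x)≤f(x) for all x, and H a subgraph of G. If for every component C of F the graph G−V(C) admits all fractional (g,f)-factors excluding H (restricted to G−V(C)), then G itself admits all fractional (g,f)-factors excluding H. -/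
open Finset

attribute [local instance] Classical.propDecidable

/-- Theorem 6: if `F` is a complete-factor of `G` with at least two components
and `G − V(C)` has all fractional `(g,f)`-factors excluding `H` for each
component `C` of `F`, then so does `G`. -/
theorem stmt3 {V : Type*} [Fintype V] [DecidableEq V] (G H F : SimpleGraph V)
    (g f : V → ℕ) (hg : ∀ x, 1 ≤ g x) (hgf : ∀ x, g x ≤ f x)
    (hHG : H ≤ G) (hFG : F ≤ G)
    (hcomplete : ∀ x y : V, F.Reachable x y → x ≠ y → F.Adj x y)
    (hω : 2 ≤ Fintype.card F.ConnectedComponent)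
    (hcomp : ∀ C : F.ConnectedComponent,
      HasAllFracExcl (G.induce C.suppᶜ) (H.induce C.suppᶜ)
        (fun x => g x.1) (fun x => f x.1)) :
    HasAllFracExcl G H g f := by
  classical
  intro r hr
  have key : ∀ C : F.ConnectedComponent, ∃ h : (C.suppᶜ : Set V) → (C.suppᶜ : Set V) → ℝ,
      IsFracFactor ((G.induce C.suppᶜ) \ (H.induce C.suppᶜ)) (fun x => r x.1) h :=
    fun C => hcomp C (fun x => r x.1) (fun x => hr x.1)
  choose hC hCfac using key
  set ω : ℕ := Fintype.card F.ConnectedComponent with hωdef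
  have hω2 : (2:ℝ) ≤ (ω:ℝ) := by exact_mod_cast hω
  have hωpos : (0:ℝ) < (ω:ℝ) - 1 := by linarith
  set E : F.ConnectedComponent → V → V → ℝ := fun C x y =>
    if hx : x ∈ (C.suppᶜ : Set V) then if hy : y ∈ (C.suppᶜ : Set V) then
      hC C ⟨x, hx⟩ ⟨y, hy⟩ else 0 else 0 with hE
  have Esymm : ∀ C x y, E C x y = E C y x := by
    intro C x y
    simp only [hE]
    split_ifs with hx hy hy
    · exact (hCfac C).1 _ _
    · rfl
    · rfl
    · rfl
  have Enonneg : ∀ C x y, 0 ≤ E C x y := by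
    intro C x y
    simp only [hE]
    split_ifs
    · exact ((hCfac C).2.1 _ _).1
    · rfl
    · rfl
  have Ele1 : ∀ C x y, E C x y ≤ 1 := by
    intro C x y
    simp only [hE]
    split_ifs
    · exact ((hCfac C).2.1 _ _).2
    · norm_num
    · norm_num
  have Ezero : ∀ (C : F.ConnectedComponent) (x y : V),
      x ∉ (C.suppᶜ : Set V) → E C x y = 0 := by
    intro C x y hx
    simp only [hE, dif_neg hx]
  have Esupp : ∀ (C : F.ConnectedComponent) (x y : V),
      ¬ (G \ H).Adj x y → E C x y = 0 := by
    intro C x y hadj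
    simp only [hE]
    split_ifs with hx hy
    · refine (hCfac C).2.2.1 _ _ ?_
      intro hA
      apply hadj
      simp only [SimpleGraph.sdiff_adj] at hA ⊢
      exact hA
    · rfl
    · rfl
  have Esum : ∀ (C : F.ConnectedComponent) (x : V) (hx : x ∈ (C.suppᶜ : Set V)),
      ∑ y : V, E C x y = (r x : ℝ) := by
    intro C x hx
    have hsum := (hCfac C).2.2.2 ⟨x, hx⟩
    calc ∑ y : V, E C x y
        = ∑ y ∈ (C.suppᶜ : Set V).toFinset, E C x y := by
          refine (Finset.sum_subset (Finset.subset_univ _) ?_).symm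
          intro y _ hy
          simp only [Set.mem_toFinset] at hy
          simp only [hE, dif_pos hx, dif_neg hy]
      _ = ∑ y : (C.suppᶜ : Set V), E C x y.1 := (Finset.sum_set_coe _).symm
      _ = ∑ y : (C.suppᶜ : Set V), hC C ⟨x, hx⟩ y := by
          refine Finset.sum_congr rfl ?_
          intro y _
          simp only [hE, dif_pos hx, dif_pos y.2]
      _ = (r x : ℝ) := hsum
  -- the averaged function
  refine ⟨fun x y => (∑ C : F.ConnectedComponent, E C x y) / ((ω:ℝ) - 1), ?_, ?_, ?_, ?_⟩
  · intro x y
    exact congrArg (· / ((ω:ℝ) - 1)) (Finset.sum_congr rfl fun C _ => Esymm C x y)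
  · intro x y
    constructor
    · exact div_nonneg (Finset.sum_nonneg fun C _ => Enonneg C x y) hωpos.le
    · rw [div_le_one hωpos]
      have hx : x ∉ ((F.connectedComponentMk x).suppᶜ : Set V) := by
        simp [SimpleGraph.ConnectedComponent.mem_supp_iff]
      calc ∑ C : F.ConnectedComponent, E C x y
          = ∑ C ∈ Finset.univ.erase (F.connectedComponentMk x), E C x y :=
            (Finset.sum_erase (f := fun C => E C x y) Finset.univ (Ezero _ x y hx)).symm
        _ ≤ ∑ C ∈ Finset.univ.erase (F.connectedComponentMk x), (1:ℝ) :=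
            Finset.sum_le_sum fun C _ => Ele1 C x y
        _ = ((ω:ℝ) - 1) := by
            rw [Finset.sum_const, Finset.card_erase_of_mem (Finset.mem_univ _),
              Finset.card_univ, nsmul_eq_mul, mul_one]
            rw [← hωdef]
            have : 1 ≤ ω := by omega
            push_cast [Nat.cast_sub this]
            ring
  · intro x y hadj
    rw [div_eq_zero_iff]
    left
    exact Finset.sum_eq_zero fun C _ => Esupp C x y hadj
  · intro x
    rw [← Finset.sum_div]
    rw [Finset.sum_comm]
    have hx : x ∉ ((F.connectedComponentMk x).suppᶜ : Set V) := by
      simp [SimpleGraph.ConnectedComponent.mem_supp_iff]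
    have hterm : ∀ C ∈ Finset.univ.erase (F.connectedComponentMk x),
        ∑ y : V, E C x y = (r x : ℝ) := by
      intro C hCmem
      have hCne : C ≠ F.connectedComponentMk x := (Finset.mem_erase.mp hCmem).1
      have hxC : x ∈ (C.suppᶜ : Set V) := by
        simp [SimpleGraph.ConnectedComponent.mem_supp_iff]
        exact fun h => hCne h.symm
      exact Esum C x hxC
    have hzero : ∑ y : V, E (F.connectedComponentMk x) x y = 0 :=
      Finset.sum_eq_zero fun y _ => Ezero _ x y hx
    calc (∑ C : F.ConnectedComponent, ∑ y : V, E C x y) / ((ω:ℝ) - 1)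
        = (∑ C ∈ Finset.univ.erase (F.connectedComponentMk x), ∑ y : V, E C x y)
            / ((ω:ℝ) - 1) := by
          rw [show (∑ C : F.ConnectedComponent, ∑ y : V, E C x y)
              = ∑ C ∈ Finset.univ.erase (F.connectedComponentMk x), ∑ y : V, E C x y from
            (Finset.sum_erase (f := fun C => ∑ y : V, E C x y) Finset.univ hzero).symm]
      _ = (((ω:ℝ) - 1) * (r x : ℝ)) / ((ω:ℝ) - 1) := by
          rw [Finset.sum_congr rfl hterm, Finset.sum_const,
            Finset.card_erase_of_mem (Finset.mem_univ _), Finset.card_univ,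
            nsmul_eq_mul]
          rw [← hωdef]
          have : 1 ≤ ω := by omega
          push_cast [Nat.cast_sub this]
          ring
      _ = (r x : ℝ) := by field_simp
end

section
/- Let G be a finite simple graph, F a complete-factor of G with ω(F)≥2 components, and g,f:V(G)→ℤ⁺ with g(x)≤f(x) for all x. If G−V(C) has all fractional (g,f)-factors for each component C of F, then G has all fractional (g,f)-factors. -/
open Finset

attribute [local instance] Classical.propDecidable

/-- Corollary 7: if `F` is a complete-factor of `G` with at least two components
and `G − V(C)` has all fractional `(g,f)`-factors for each component `C` of `F`,
then so does `G`. -/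
theorem stmt4 {V : Type*} [Fintype V] [DecidableEq V] (G F : SimpleGraph V)
    (g f : V → ℕ) (hg : ∀ x, 1 ≤ g x) (hgf : ∀ x, g x ≤ f x) (hFG : F ≤ G)
    (hcomplete : ∀ x y : V, F.Reachable x y → x ≠ y → F.Adj x y)
    (hω : 2 ≤ Fintype.card F.ConnectedComponent)
    (hcomp : ∀ C : F.ConnectedComponent,
      HasAllFrac (G.induce C.suppᶜ) (fun x => g x.1) (fun x => f x.1)) :
    HasAllFrac G g f := by
  classical
  intro r hr
  have hfac : ∀ C : F.ConnectedComponent,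
      HasFracFactor (G.induce C.suppᶜ) (fun x => r x.1) :=
    fun C => hcomp C (fun x => r x.1) (fun x => hr x.1)
  choose hh hspec using hfac
  set n : ℕ := Fintype.card F.ConnectedComponent with hn
  have hn1 : (1 : ℝ) ≤ (n : ℝ) - 1 := by
    have : (2 : ℝ) ≤ (n : ℝ) := by exact_mod_cast hω
    linarith
  have hpos : (0 : ℝ) < (n : ℝ) - 1 := by linarith
  set H : F.ConnectedComponent → V → V → ℝ := fun C x y =>
    if hx : x ∈ C.suppᶜ then if hy : y ∈ C.suppᶜ then hh C ⟨x, hx⟩ ⟨y, hy⟩ else 0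
    else 0 with hH
  have Hval : ∀ (C : F.ConnectedComponent) (x y : V) (hx : x ∈ C.suppᶜ)
      (hy : y ∈ C.suppᶜ), H C x y = hh C ⟨x, hx⟩ ⟨y, hy⟩ := by
    intro C x y hx hy
    show dite _ _ _ = _
    rw [dif_pos hx, dif_pos hy]
  have Hval0 : ∀ (C : F.ConnectedComponent) (x y : V),
      x ∉ C.suppᶜ ∨ y ∉ C.suppᶜ → H C x y = 0 := by
    intro C x y h
    show dite _ _ _ = 0
    rcases h with h | h
    · rw [dif_neg h]
    · by_cases hx : x ∈ C.suppᶜ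
      · rw [dif_pos hx, dif_neg h]
      · rw [dif_neg hx]
  have Hsymm : ∀ C x y, H C x y = H C y x := by
    intro C x y
    by_cases hx : x ∈ C.suppᶜ <;> by_cases hy : y ∈ C.suppᶜ
    · rw [Hval C x y hx hy, Hval C y x hy hx, (hspec C).1]
    · rw [Hval0 C x y (Or.inr hy), Hval0 C y x (Or.inl hy)]
    · rw [Hval0 C x y (Or.inl hx), Hval0 C y x (Or.inr hx)]
    · rw [Hval0 C x y (Or.inl hx), Hval0 C y x (Or.inr hx)]
  have Hnn : ∀ C x y, 0 ≤ H C x y := by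
    intro C x y
    by_cases hx : x ∈ C.suppᶜ
    · by_cases hy : y ∈ C.suppᶜ
      · rw [Hval C x y hx hy]; exact ((hspec C).2.1 _ _).1
      · rw [Hval0 C x y (Or.inr hy)]
    · rw [Hval0 C x y (Or.inl hx)]
  have Hle : ∀ C x y, H C x y ≤ 1 := by
    intro C x y
    by_cases hx : x ∈ C.suppᶜ
    · by_cases hy : y ∈ C.suppᶜ
      · rw [Hval C x y hx hy]; exact ((hspec C).2.1 _ _).2
      · rw [Hval0 C x y (Or.inr hy)]; norm_num
    · rw [Hval0 C x y (Or.inl hx)]; norm_num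
  have Hzero : ∀ C x y, x ∈ C.supp → H C x y = 0 := by
    intro C x y hx
    exact Hval0 C x y (Or.inl (by simpa using hx))
  have Hadj : ∀ C x y, ¬ G.Adj x y → H C x y = 0 := by
    intro C x y hxy
    by_cases hx : x ∈ C.suppᶜ
    · by_cases hy : y ∈ C.suppᶜ
      · rw [Hval C x y hx hy]
        exact (hspec C).2.2.1 _ _ (by simpa using hxy)
      · exact Hval0 C x y (Or.inr hy)
    · exact Hval0 C x y (Or.inl hx)
  have Hdeg : ∀ (C : F.ConnectedComponent) (x : V), x ∈ C.suppᶜ →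
      ∑ y : V, H C x y = (r x : ℝ) := by
    intro C x hx
    have h1 := (hspec C).2.2.2 ⟨x, hx⟩
    have h2 : ∑ y : V, H C x y = ∑ y ∈ Set.toFinset C.suppᶜ, H C x y := by
      refine (Finset.sum_subset (Finset.subset_univ _) ?_).symm
      intro y _ hy
      have hy' : y ∉ C.suppᶜ := fun h => hy (Set.mem_toFinset.mpr h)
      exact Hval0 C x y (Or.inr hy')
    rw [h2, Finset.sum_subtype _ (fun y => Set.mem_toFinset) (fun y => H C x y),
      ← h1]
    refine Finset.sum_congr rfl fun a _ => ?_
    rw [Hval C x a.1 hx a.2]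
  have hmem : ∀ (C : F.ConnectedComponent) (x : V),
      x ∈ C.suppᶜ ↔ C ≠ F.connectedComponentMk x := by
    intro C x
    simp only [Set.mem_compl_iff, SimpleGraph.ConnectedComponent.mem_supp_iff]
    exact ⟨fun h h' => h h'.symm, fun h h' => h h'.symm⟩
  have hsum : ∀ x : V, ∑ C : F.ConnectedComponent, ∑ y : V, H C x y
      = ((n : ℝ) - 1) * (r x : ℝ) := by
    intro x
    have key : ∀ C : F.ConnectedComponent, ∑ y : V, H C x y
        = (r x : ℝ) - (if C = F.connectedComponentMk x then (r x : ℝ) else 0) := by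
      intro C
      by_cases hC : C = F.connectedComponentMk x
      · subst hC
        rw [Finset.sum_eq_zero fun y _ => Hzero _ x y rfl]
        simp
      · rw [Hdeg C x ((hmem C x).mpr hC)]
        simp [hC]
    rw [Finset.sum_congr rfl fun C _ => key C, Finset.sum_sub_distrib,
      Finset.sum_const, Finset.sum_ite_eq' univ (F.connectedComponentMk x)
        (fun _ => (r x : ℝ))]
    simp only [Finset.mem_univ, if_true, Finset.card_univ, ← hn, nsmul_eq_mul]
    ring
  have hbd : ∀ x y : V, ∑ C : F.ConnectedComponent, H C x y ≤ (n : ℝ) - 1 := by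
    intro x y
    have key : ∀ C : F.ConnectedComponent,
        H C x y ≤ (1 : ℝ) - (if C = F.connectedComponentMk x then 1 else 0) := by
      intro C
      by_cases hC : C = F.connectedComponentMk x
      · subst hC
        rw [Hzero _ x y rfl]
        simp
      · simpa [hC] using Hle C x y
    calc ∑ C : F.ConnectedComponent, H C x y
        ≤ ∑ C : F.ConnectedComponent,
            ((1 : ℝ) - (if C = F.connectedComponentMk x then 1 else 0)) :=
          Finset.sum_le_sum fun C _ => key C
      _ = (n : ℝ) - 1 := by
          rw [Finset.sum_sub_distrib, Finset.sum_const,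
            Finset.sum_ite_eq' univ (F.connectedComponentMk x) (fun _ => (1 : ℝ))]
          simp [← hn]
  refine ⟨fun x y => (∑ C : F.ConnectedComponent, H C x y) / ((n : ℝ) - 1),
    ?_, ?_, ?_, ?_⟩
  · intro x y
    simp only [Finset.sum_congr rfl fun C _ => Hsymm C x y]
  · intro x y
    constructor
    · exact div_nonneg (Finset.sum_nonneg fun C _ => Hnn C x y) (le_of_lt hpos)
    · rw [div_le_one hpos]
      exact hbd x y
  · intro x y hxy
    show (∑ C : F.ConnectedComponent, H C x y) / ((n : ℝ) - 1) = 0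
    rw [Finset.sum_eq_zero fun C _ => Hadj C x y hxy, zero_div]
  · intro x
    show ∑ y : V, (∑ C : F.ConnectedComponent, H C x y) / ((n : ℝ) - 1) = (r x : ℝ)
    rw [← Finset.sum_div, Finset.sum_comm, hsum x,
      mul_div_cancel_left₀ _ (ne_of_gt hpos)]
end

section
/- Let G be a finite simple graph, g,f:V(G)→ℤ⁺ with g(x)≤f(x) for all x, and H a subgraph of G with d_G(x) ≥ f(x)+d_H(x) for all x and g(x)·(d_G(y)−d_H(y)) ≥ d_G(x)·f(y) for all x,y. Then for every nonempty S⊆V(G) and T={x∈V(G)∖S : d_{G−S}(x)−d_H(x)+e_H(x,S)<f(x)}, the inequality g(S)+∑_{x∈T} d_{G−S}(x)−f(T) ≥ ∑_{x∈T} d_H(x)−e_H(S,T) holds. -/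
open Finset

section
variable {V : Type*} [Fintype V] [DecidableEq V]

lemma eBtw_comm (G : SimpleGraph V) [DecidableRel G.Adj] (S T : Finset V) :
    (∑ x ∈ S, (T.filter fun y => G.Adj x y).card) = ∑ x ∈ T, (S.filter fun y => G.Adj x y).card := by
  simp only [card_filter]
  rw [Finset.sum_comm]
  exact Finset.sum_congr rfl fun y _ => Finset.sum_congr rfl fun x _ => by
    simp [G.adj_comm]

lemma degOut_eq (G : SimpleGraph V) [DecidableRel G.Adj] (S : Finset V) (x : V) :
    (Sᶜ.filter fun y => G.Adj x y).card + (S.filter fun y => G.Adj x y).card = G.degree x := by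
  rw [← Finset.card_union_of_disjoint]
  · rw [← Finset.filter_union, show Sᶜ ∪ S = (univ : Finset V) from by rw [Finset.union_comm]; simp]
    simp [SimpleGraph.degree, SimpleGraph.neighborFinset_eq_filter]
  · exact Finset.disjoint_filter_filter (disjoint_compl_left)

lemma filt_sub (G H : SimpleGraph V) [DecidableRel G.Adj] [DecidableRel H.Adj]
    (hHG : H ≤ G) (S : Finset V) (x : V) :
    (S.filter fun y => G.Adj x y).card + H.degree x
      ≤ (S.filter fun y => H.Adj x y).card + G.degree x := by
  have hsub : (S.filter fun y => H.Adj x y) ⊆ (S.filter fun y => G.Adj x y) := by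
    intro y hy; simp only [mem_filter] at *; exact ⟨hy.1, hHG hy.2⟩
  have hnb : H.neighborFinset x ⊆ G.neighborFinset x := by
    intro y hy; simp only [SimpleGraph.mem_neighborFinset] at *; exact hHG hy
  have h1 : (S.filter fun y => G.Adj x y) \ (S.filter fun y => H.Adj x y)
      ⊆ G.neighborFinset x \ H.neighborFinset x := by
    intro y hy
    simp only [mem_sdiff, mem_filter, SimpleGraph.mem_neighborFinset] at *
    tauto
  have h2 := Finset.card_le_card h1
  rw [Finset.card_sdiff_of_subset hsub, Finset.card_sdiff_of_subset hnb] at h2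
  have h3 := Finset.card_le_card hsub
  have h4 := Finset.card_le_card hnb
  simp only [SimpleGraph.degree] at *
  omega

end

/-- The key inequality in the proof of Theorem 9, for nonempty `S`. -/
theorem stmt7 {V : Type*} [Fintype V] [DecidableEq V] (G H : SimpleGraph V)
    [DecidableRel G.Adj] [DecidableRel H.Adj]
    (g f : V → ℕ) (hg : ∀ x, 1 ≤ g x) (hgf : ∀ x, g x ≤ f x) (hHG : H ≤ G)
    (hdeg : ∀ x, f x + H.degree x ≤ G.degree x)
    (hprod : ∀ x y, (G.degree x : ℤ) * f y ≤ g x * ((G.degree y : ℤ) - H.degree y)) :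
    ∀ S T : Finset V, S.Nonempty →
      T = Sᶜ.filter (fun x =>
        (degOut G S x : ℤ) - H.degree x + eBtw H {x} S < f x) →
      (∑ x ∈ S, (g x : ℤ)) + ∑ x ∈ T, (degOut G S x : ℤ) - ∑ x ∈ T, (f x : ℤ)
        ≥ ∑ x ∈ T, (H.degree x : ℤ) - eBtw H S T := by
  classical
  intro S T hS hT
  -- notation
  set a : ℤ := ∑ x ∈ S, (g x : ℤ) with ha
  set fT : ℤ := ∑ x ∈ T, (f x : ℤ) with hfT
  set B : ℤ := ∑ x ∈ T, ((G.degree x : ℤ) - (H.degree x : ℤ)) with hB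
  set dGS : ℤ := ∑ x ∈ S, (G.degree x : ℤ) with hdGS
  set eG : ℤ := ∑ x ∈ T, ((S.filter fun y => G.Adj x y).card : ℤ) with heG
  set eH : ℤ := ∑ x ∈ T, ((S.filter fun y => H.Adj x y).card : ℤ) with heH
  -- rewrite degOut sum
  have hdegOut : ∑ x ∈ T, (degOut G S x : ℤ) = (∑ x ∈ T, (G.degree x : ℤ)) - eG := by
    rw [heG, ← Finset.sum_sub_distrib]
    refine Finset.sum_congr rfl fun x _ => ?_
    have := degOut_eq G S x
    unfold degOut
    omega
  -- rewrite eBtw H S T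
  have hHsym : (eBtw H S T : ℤ) = eH := by
    unfold eBtw
    rw [eBtw_comm H S T]
    push_cast
    rfl
  rw [hdegOut, hHsym]
  have hgoal : (∑ x ∈ T, (H.degree x : ℤ)) = (∑ x ∈ T, (G.degree x : ℤ)) - B := by
    rw [hB, Finset.sum_sub_distrib]; ring
  rw [hgoal]
  -- key facts
  have key1 : eG - eH ≤ B := by
    rw [heG, heH, hB, ← Finset.sum_sub_distrib]
    refine Finset.sum_le_sum fun x _ => ?_
    have := filt_sub G H hHG S x
    omega
  have key2 : eG ≤ dGS := by
    rw [heG, hdGS, show (∑ x ∈ T, ((S.filter fun y => G.Adj x y).card : ℤ))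
        = ∑ x ∈ S, ((T.filter fun y => G.Adj x y).card : ℤ) from by
      exact_mod_cast eBtw_comm G T S]
    refine Finset.sum_le_sum fun x _ => ?_
    have h1 : (T.filter fun y => G.Adj x y) ⊆ G.neighborFinset x := by
      intro y hy; simp only [Finset.mem_filter, SimpleGraph.mem_neighborFinset] at *; exact hy.2
    have := Finset.card_le_card h1
    simp only [SimpleGraph.degree] at *
    exact_mod_cast this
  have key3 : dGS * fT ≤ a * B := by
    rw [hdGS, hfT, ha, hB, Finset.sum_mul_sum, Finset.sum_mul_sum]
    refine Finset.sum_le_sum fun x _ => Finset.sum_le_sum fun y _ => hprod x y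
  have key4 : fT ≤ B := by
    rw [hfT, hB]
    refine Finset.sum_le_sum fun x _ => ?_
    have := hdeg x
    omega
  have ha0 : 0 ≤ a := Finset.sum_nonneg fun x _ => by positivity
  have hfT0 : 0 ≤ fT := Finset.sum_nonneg fun x _ => by positivity
  have heH0 : 0 ≤ eH := Finset.sum_nonneg fun x _ => by positivity
  rcases le_or_gt fT a with hca | hca
  · linarith
  · have hpos : 0 < fT := lt_of_le_of_lt ha0 hca
    have hprod2 : 0 ≤ (fT - a) * (B - fT) := mul_nonneg (by linarith) (by linarith)
    nlinarith [mul_le_mul_of_nonneg_right key2 hfT0, key3]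
end

section
/- Let G be a finite simple graph, H a subgraph of G, and S,T disjoint subsets of V(G) with S nonempty. Suppose D:=∑_{x∈S}d_G(x) satisfies D·f(T) ≤ g(S)·(∑_{x∈T}d_G(x) − ∑_{x∈T}d_H(x)) and D ≥ g(S) ≥ 1. Then g(S)+∑_{x∈T} d_{G−S}(x) − f(T) − ∑_{x∈T} d_H(x) + e_H(S,T) ≥ 0. -/
open Finset

section Aux
variable {V : Type*} [Fintype V] [DecidableEq V]

lemma eBtw_comm_s11 (G : SimpleGraph V) [DecidableRel G.Adj] (S T : Finset V) :
    eBtw G S T = eBtw G T S := by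
  unfold eBtw
  simp only [card_filter]
  rw [Finset.sum_comm]
  exact Finset.sum_congr rfl fun y _ => Finset.sum_congr rfl fun x _ => by
    simp [G.adj_comm]

lemma deg_split (G : SimpleGraph V) [DecidableRel G.Adj] (S : Finset V) (x : V) :
    G.degree x = (S.filter fun y => G.Adj x y).card + degOut G S x := by
  unfold degOut
  have hd : G.degree x = (univ.filter fun y => G.Adj x y).card := by
    rw [← SimpleGraph.neighborFinset_eq_filter]; rfl
  rw [hd, ← Finset.card_union_of_disjoint
    (Finset.disjoint_filter_filter disjoint_compl_right), ← Finset.filter_union,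
    Finset.union_compl]

end Aux

/-- The nonempty-`S` computation in the proof of Theorem 9. -/
theorem stmt11 {V : Type*} [Fintype V] [DecidableEq V] (G H : SimpleGraph V)
    [DecidableRel G.Adj] [DecidableRel H.Adj] (hHG : H ≤ G)
    (g f : V → ℕ) (S T : Finset V) (hS : S.Nonempty) (hST : Disjoint S T)
    (hD1 : (∑ x ∈ S, (G.degree x : ℤ)) * (∑ x ∈ T, (f x : ℤ)) ≤
      (∑ x ∈ S, (g x : ℤ)) *
        ((∑ x ∈ T, (G.degree x : ℤ)) - ∑ x ∈ T, (H.degree x : ℤ)))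
    (hD2 : (∑ x ∈ S, (g x : ℤ)) ≤ ∑ x ∈ S, (G.degree x : ℤ))
    (hD3 : 1 ≤ ∑ x ∈ S, (g x : ℤ)) :
    0 ≤ (∑ x ∈ S, (g x : ℤ)) + ∑ x ∈ T, (degOut G S x : ℤ)
      - ∑ x ∈ T, (f x : ℤ) - ∑ x ∈ T, (H.degree x : ℤ) + eBtw H S T := by
  -- Notation
  have hdGnat : ∑ x ∈ T, G.degree x = (∑ x ∈ T, degOut G S x) + eBtw G S T := by
    rw [eBtw_comm_s11]
    unfold eBtw
    rw [← Finset.sum_add_distrib]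
    exact Finset.sum_congr rfl fun x _ => by rw [deg_split G S x, Nat.add_comm]
  have hdHnat : ∑ x ∈ T, H.degree x ≤ (∑ x ∈ T, degOut G S x) + eBtw H S T := by
    rw [eBtw_comm_s11]
    unfold eBtw
    rw [← Finset.sum_add_distrib]
    refine Finset.sum_le_sum fun x _ => ?_
    rw [deg_split H S x, Nat.add_comm]
    refine Nat.add_le_add ?_ le_rfl
    unfold degOut
    exact Finset.card_le_card (Finset.monotone_filter_right _ fun y _ h => hHG h)
  have heGnat : eBtw G S T ≤ ∑ x ∈ S, G.degree x := by
    refine Finset.sum_le_sum fun x _ => ?_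
    have hd : G.degree x = (univ.filter fun y => G.Adj x y).card := by
      rw [← SimpleGraph.neighborFinset_eq_filter]; rfl
    rw [hd]
    exact Finset.card_le_card (Finset.filter_subset_filter _ (Finset.subset_univ T))
  have hdG' : (∑ x ∈ T, (G.degree x : ℤ)) =
      (∑ x ∈ T, (degOut G S x : ℤ)) + (eBtw G S T : ℤ) := by exact_mod_cast hdGnat
  have hdH' : (∑ x ∈ T, (H.degree x : ℤ)) ≤
      (∑ x ∈ T, (degOut G S x : ℤ)) + (eBtw H S T : ℤ) := by exact_mod_cast hdHnat
  have heG' : (eBtw G S T : ℤ) ≤ ∑ x ∈ S, (G.degree x : ℤ) := by exact_mod_cast heGnat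
  have heH : (0 : ℤ) ≤ (eBtw H S T : ℤ) := Int.natCast_nonneg _
  nlinarith [mul_nonneg (sub_nonneg.2 hD2)
      (sub_nonneg.2 hdH'),
    mul_nonneg (by linarith : (0:ℤ) ≤ ∑ x ∈ S, (g x : ℤ))
      (sub_nonneg.2 heG'),
    mul_nonneg (by linarith : (0:ℤ) ≤ ∑ x ∈ S, (g x : ℤ)) heH]
end

section
/- Let G be a finite simple graph, g,f:V(G)→ℤ⁺ with g(x)≤f(x) for all x, and suppose there exists S⊆V(G) with T={x∈V(G)∖S : d_{G−S}(x)<f(x)} such that g(S)+∑_{x∈T}d_{G−S}(x)−f(T) < 0. Define r by r(x)=g(x) for x∈S and r(x)=f(x) for x∉S. Then G has no fractional r-factor. -/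
open Finset

/-- The necessity construction in Lu's theorem: a deficient pair `(S, T)` yields
an `r` (equal to `g` on `S` and `f` off `S`) with no fractional `r`-factor. -/
theorem stmt14 {V : Type*} [Fintype V] [DecidableEq V] (G : SimpleGraph V)
    [DecidableRel G.Adj]
    (g f : V → ℕ) (hg : ∀ x, 1 ≤ g x) (hgf : ∀ x, g x ≤ f x)
    (S T : Finset V) (hT : T = Sᶜ.filter fun x => degOut G S x < f x)
    (hdef : (∑ x ∈ S, (g x : ℤ)) + ∑ x ∈ T, (degOut G S x : ℤ)
      - ∑ x ∈ T, (f x : ℤ) < 0) :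
    ¬ HasFracFactor G (fun x => if x ∈ S then g x else f x) := by
  rintro ⟨h, hsym, hbd, hsupp, hdeg⟩
  have key : (∑ x ∈ T, (f x : ℝ)) ≤ (∑ x ∈ S, (g x : ℝ)) + ∑ x ∈ T, (degOut G S x : ℝ) := by
    have h1 : ∀ x ∈ T, (f x : ℝ) = (∑ y ∈ S, h x y) + ∑ y ∈ Sᶜ, h x y := by
      intro x hx
      have hxS : x ∉ S := by
        subst hT; exact Finset.mem_compl.mp (Finset.mem_filter.mp hx).1
      have hd : ∑ y : V, h x y = (f x : ℝ) := by
        rw [hdeg x]; simp [hxS]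
      rw [← hd, Finset.sum_add_sum_compl S]
    calc ∑ x ∈ T, (f x : ℝ)
        = ∑ x ∈ T, ((∑ y ∈ S, h x y) + ∑ y ∈ Sᶜ, h x y) := Finset.sum_congr rfl h1
      _ = (∑ x ∈ T, ∑ y ∈ S, h x y) + ∑ x ∈ T, ∑ y ∈ Sᶜ, h x y := Finset.sum_add_distrib
      _ ≤ (∑ x ∈ S, (g x : ℝ)) + ∑ x ∈ T, (degOut G S x : ℝ) := by
          refine add_le_add ?_ ?_
          · calc (∑ x ∈ T, ∑ y ∈ S, h x y)
                ≤ ∑ x : V, ∑ y ∈ S, h x y := by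
                  refine Finset.sum_le_sum_of_subset_of_nonneg (Finset.subset_univ T) ?_
                  intro i _ _
                  exact Finset.sum_nonneg fun y _ => (hbd i y).1
              _ = ∑ y ∈ S, ∑ x : V, h x y := Finset.sum_comm
              _ = ∑ y ∈ S, (g y : ℝ) := by
                  refine Finset.sum_congr rfl fun y hy => ?_
                  have : ∑ x : V, h x y = ∑ x : V, h y x :=
                    Finset.sum_congr rfl fun x _ => hsym x y
                  rw [this, hdeg y]; simp [hy]
          · refine Finset.sum_le_sum fun x _ => ?_
            have : (∑ y ∈ Sᶜ, h x y) = ∑ y ∈ Sᶜ.filter (fun y => G.Adj x y), h x y := by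
              refine (Finset.sum_filter_of_ne ?_).symm
              intro y _ hne
              by_contra hadj
              exact hne (hsupp x y hadj)
            rw [this, degOut]
            calc ∑ y ∈ Sᶜ.filter (fun y => G.Adj x y), h x y
                ≤ ∑ _y ∈ Sᶜ.filter (fun y => G.Adj x y), (1:ℝ) :=
                  Finset.sum_le_sum fun y _ => (hbd x y).2
              _ = ((Sᶜ.filter fun y => G.Adj x y).card : ℝ) := by
                  simp
  have h2 : ((∑ x ∈ S, (g x : ℤ)) : ℝ) + ((∑ x ∈ T, (degOut G S x : ℤ)) : ℝ)
      - ((∑ x ∈ T, (f x : ℤ)) : ℝ) < 0 := by exact_mod_cast hdef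
  push_cast at h2
  linarith
end
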